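/- arXiv:1611.00991 — 4 statements merged into one kernel-verified Lean document; each statement's English description precedes it below -/
import Mathlib

section
/- Let X and Y be real-valued random variables with E[X] = E[Y], finite second moments, and let t be a real number. Then |E[e^{itX}] - E[e^{itY}]| ≤ |t| · sqrt(Var[X - Y]). -/
open MeasureTheory ProbabilityTheory Complex

lemma expI_lipschitz : LipschitzWith 1 (fun x : ℝ => Complex.exp (x * Complex.I)) := by
  have hd : ∀ x : ℝ, HasDerivAt (fun x : ℝ => Complex.exp (x * Complex.I))
      (Complex.exp (x * Complex.I) * Complex.I) x := by
    intro x
    have h1 : HasDerivAt (fun x : ℝ => (x : ℂ) * Complex.I) Complex.I x := by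
      simpa using (Complex.ofRealCLM.hasDerivAt (x := x)).mul_const Complex.I
    exact h1.cexp
  apply lipschitzWith_of_nnnorm_deriv_le (fun x => (hd x).differentiableAt)
  intro x
  rw [(hd x).deriv]
  simp [← NNReal.coe_le_coe, Complex.norm_exp_ofReal_mul_I]

lemma expI_dist_le (a b : ℝ) :
    ‖Complex.exp (a * Complex.I) - Complex.exp (b * Complex.I)‖ ≤ |a - b| := by
  have := expI_lipschitz.dist_le_mul a b
  simpa [dist_eq_norm, Real.dist_eq] using this

/-- If `X` and `Y` are integrable real random variables with equal means and
`X - Y` square-integrable, then for any real `t`,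
`|E[e^{itX}] - E[e^{itY}]| ≤ |t| · sqrt(Var[X - Y])`. -/
theorem stmt_0 {Ω : Type*} [MeasureSpace Ω] [IsProbabilityMeasure (ℙ : Measure Ω)]
    (X Y : Ω → ℝ) (hX : Integrable X) (hY : Integrable Y)
    (hE : ∫ ω, X ω = ∫ ω, Y ω)
    (h2 : MemLp (X - Y) 2 ℙ) (t : ℝ) :
    ‖(∫ ω, Complex.exp (t * X ω * Complex.I)) -
        (∫ ω, Complex.exp (t * Y ω * Complex.I))‖
      ≤ |t| * Real.sqrt (variance (X - Y) ℙ) := by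
  have hZint : Integrable (X - Y) := h2.integrable one_le_two
  have hZm : ∫ ω, (X - Y) ω = 0 := by
    simp only [Pi.sub_apply]
    rw [integral_sub hX hY, hE, sub_self]
  -- variance = second moment
  have hvar : variance (X - Y) ℙ = ∫ ω, ((X - Y) ω) ^ 2 := by
    rw [variance_eq_sub h2, hZm]
    simp
  -- integrability of the exponentials
  have cont : Continuous (fun r : ℝ => Complex.exp (↑t * ↑r * Complex.I)) := by
    fun_prop
  have hfm : ∀ (W : Ω → ℝ), Integrable W →
      Integrable (fun ω => Complex.exp (t * W ω * Complex.I)) := by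
    intro W hW
    have hm : AEStronglyMeasurable (fun ω => Complex.exp (t * W ω * Complex.I)) ℙ :=
      cont.comp_aestronglyMeasurable hW.aestronglyMeasurable
    refine (integrable_const (1 : ℝ)).mono' hm (Filter.Eventually.of_forall fun ω => ?_)
    simp only [← Complex.ofReal_mul]
    rw [Complex.norm_exp_ofReal_mul_I]
  have hfX := hfm X hX
  have hfY := hfm Y hY
  rw [← integral_sub hfX hfY]
  have h1 : ‖∫ ω, (Complex.exp (t * X ω * Complex.I)
      - Complex.exp (t * Y ω * Complex.I))‖
      ≤ ∫ ω, ‖Complex.exp (t * X ω * Complex.I) - Complex.exp (t * Y ω * Complex.I)‖ := by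
    exact norm_integral_le_integral_norm _
  have hZabs : Integrable (fun ω => |t| * |(X - Y) ω|) := (hZint.abs).const_mul _
  have h2' : ∫ ω, ‖Complex.exp (t * X ω * Complex.I) - Complex.exp (t * Y ω * Complex.I)‖
      ≤ ∫ ω, |t| * |(X - Y) ω| := by
    refine integral_mono ((hfX.sub hfY).norm) hZabs (fun ω => ?_)
    have := expI_dist_le (t * X ω) (t * Y ω)
    simp only [Complex.ofReal_mul] at this
    calc ‖Complex.exp (t * X ω * Complex.I) - Complex.exp (t * Y ω * Complex.I)‖
        ≤ |t * X ω - t * Y ω| := this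
      _ = |t| * |(X - Y) ω| := by rw [← mul_sub, abs_mul]; simp
  have habs2 : MemLp (fun ω => |(X - Y) ω|) 2 ℙ := by
    simpa [Real.norm_eq_abs] using h2.norm
  -- Cauchy–Schwarz via nonnegativity of variance of |Z|
  have hCS : ∫ ω, |(X - Y) ω| ≤ Real.sqrt (∫ ω, ((X - Y) ω) ^ 2) := by
    have hv := variance_nonneg (fun ω => |(X - Y) ω|) ℙ
    rw [variance_eq_sub habs2] at hv
    have hsq : (∫ ω, |(X - Y) ω|) ^ 2 ≤ ∫ ω, ((X - Y) ω) ^ 2 := by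
      have : (∫ ω, ((fun ω => |(X - Y) ω|) ^ 2) ω) = ∫ ω, ((X - Y) ω) ^ 2 := by
        simp [sq_abs]
      rw [this] at hv
      linarith [hv]
    rw [show (∫ ω, |(X - Y) ω|) = √((∫ ω, |(X - Y) ω|) ^ 2) from
      (Real.sqrt_sq (integral_nonneg fun ω => abs_nonneg _)).symm]
    exact Real.sqrt_le_sqrt hsq
  calc ‖∫ ω, (Complex.exp (t * X ω * Complex.I)
        - Complex.exp (t * Y ω * Complex.I))‖
      ≤ ∫ ω, |t| * |(X - Y) ω| := h1.trans h2'
    _ = |t| * ∫ ω, |(X - Y) ω| := integral_const_mul _ _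
    _ ≤ |t| * Real.sqrt (∫ ω, ((X - Y) ω) ^ 2) := by
        exact mul_le_mul_of_nonneg_left hCS (abs_nonneg t)
    _ = |t| * Real.sqrt (variance (X - Y) ℙ) := by rw [hvar]
end

section
/- Let f : ℝ → ℝ be continuous with compact support and with F f continuous. Fix 0 < α < 1. Then (1/n^{1-α}) ∑_{k=-∞}^{∞} |F f(k / n^{1-α})|² → ∫_ℝ |F f(ξ)|² dξ as n → ∞, provided ∫_ℝ |F f(ξ)|²(1+|ξ|) dξ < ∞. -/
open MeasureTheory Real Complex Filter Topology

/-- The Fourier transform with normalization `F f(ω) = (1/2π) ∫ e^{-ixω} f(x) dx`. -/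
noncomputable def fourierT (f : ℝ → ℝ) (ω : ℝ) : ℂ :=
  (1 / (2 * Real.pi)) * ∫ x : ℝ, Complex.exp (-(x * ω) * Complex.I) * (f x : ℂ)

section Aux
open FourierTransform Set Convolution Pointwise

lemma fourierIntegral_eq_real (F : ℝ → ℂ) (ξ : ℝ) :
    𝓕 F ξ
      = ∫ v : ℝ, Complex.exp ((-2 * π * (v * ξ) : ℝ) * Complex.I) * F v := by
  rw [Real.fourier_eq']
  refine integral_congr_ae (ae_of_all _ fun v => ?_)
  simp only [smul_eq_mul, RCLike.inner_apply, starRingEnd_apply, star_trivial]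
  rw [mul_comm ξ v]

lemma fourierT_eq (f : ℝ → ℝ) (ω : ℝ) :
    fourierT f ω = (1 / (2 * Real.pi) : ℂ) *
      𝓕 (fun x => (f x : ℂ)) (ω / (2 * Real.pi)) := by
  rw [fourierT, Real.fourier_eq']
  congr 1
  refine integral_congr_ae (ae_of_all _ fun x => ?_)
  simp only [smul_eq_mul, RCLike.inner_apply, starRingEnd_apply, star_trivial]
  congr 2
  have hπ : Real.pi ≠ 0 := Real.pi_ne_zero
  have h : -2 * Real.pi * ((ω / (2 * Real.pi)) * x) = -(x * ω) := by
    field_simp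
  rw [h]
  push_cast
  ring

lemma abs_fourierT_sq (f : ℝ → ℝ) (ω : ℝ) : (‖fourierT f ω‖)^2
    = (1 / (2*Real.pi))^2
      * ‖𝓕 (fun x => (f x : ℂ)) (ω / (2*Real.pi))‖^2 := by
  rw [fourierT_eq, norm_mul]
  have h1 : ‖(1 / (2 * Real.pi) : ℂ)‖ = 1 / (2 * Real.pi) := by
    have : (1 / (2 * Real.pi) : ℂ) = ((1 / (2 * Real.pi) : ℝ) : ℂ) := by push_cast; ring
    rw [this, Complex.norm_real, Real.norm_eq_abs, abs_of_pos (by positivity)]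
  rw [h1, mul_pow]

lemma fourierIntegral_eq_fourierT (f : ℝ → ℝ) (ξ : ℝ) :
    𝓕 (fun x => (f x : ℂ)) ξ
      = (2 * Real.pi : ℂ) * fourierT f (2 * Real.pi * ξ) := by
  rw [fourierT_eq]
  have hπ : (2 * Real.pi : ℝ) ≠ 0 := by positivity
  rw [mul_div_cancel_left₀ _ hπ, ← mul_assoc]
  have : (2 * Real.pi : ℂ) * (1 / (2 * Real.pi) : ℂ) = 1 := by
    have hπc : (2 * (Real.pi : ℂ)) ≠ 0 := by
      simp [Complex.ofReal_ne_zero, Real.pi_ne_zero]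
    field_simp
  rw [this, one_mul]

lemma parseval_sum (f : ℝ → ℝ) (hf : Continuous f) (R : ℝ) (hR : 0 < R)
    (hsub : ∀ x : ℝ, x ∉ Set.Icc (-R) R → f x = 0) (P : ℝ) (hP : 2 * R + 2 ≤ P) :
    ∑' k : ℤ, ‖𝓕 (fun x => (f x : ℂ)) ((k : ℝ) / P)‖ ^ 2
      = P * ∫ x : ℝ, (f x) ^ 2 := by
  have hP0 : 0 < P := by linarith
  haveI : Fact (0 < P) := ⟨hP0⟩
  set a : ℝ := -(R + 1) with ha
  set g : ℝ → ℂ := fun x => (f x : ℂ) with hg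
  have hg0 : ∀ x : ℝ, x ∉ Set.Ioc a (a + P) → g x = 0 := by
    intro x hx
    have : f x = 0 := by
      apply hsub
      intro hx'
      exact hx ⟨by simp only [ha]; linarith [hx'.1], by linarith [hx'.2]⟩
    simp [hg, this]
  have hae_ne : ∀ᵐ x : ℝ, x ≠ a + P := by
    have h0 : (volume : Measure ℝ) {a + P} = 0 := measure_singleton _
    rw [ae_iff]; simpa using h0
  have hcont : Continuous (AddCircle.liftIco P a g) := by
    apply AddCircle.liftIco_continuous
    · have h1 : f a = 0 := hsub a (by intro hx; have := hx.1; simp only [ha] at this; linarith)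
      have h2 : f (a + P) = 0 := hsub _ (by intro hx; have := hx.2; simp only [ha] at this; linarith)
      simp [hg, h1, h2]
    · exact ((Complex.continuous_ofReal.comp hf)).continuousOn
  have hcs : HasCompactSupport (AddCircle.liftIco P a g) :=
    IsCompact.of_isClosed_subset isCompact_univ (isClosed_tsupport _) (Set.subset_univ _)
  have hLp : MemLp (AddCircle.liftIco P a g) 2 (@AddCircle.haarAddCircle P _) :=
    hcont.memLp_of_hasCompactSupport hcs
  set L := hLp.toLp _ with hL
  have hae : ∀ᵐ t ∂(@AddCircle.haarAddCircle P _), L t = AddCircle.liftIco P a g t := hLp.coeFn_toLp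
  have hcoeff : ∀ k : ℤ, fourierCoeff (L : AddCircle P → ℂ) k
      = (1 / P : ℂ) * 𝓕 g ((k : ℝ) / P) := by
    intro k
    have e1 : fourierCoeff (L : AddCircle P → ℂ) k = fourierCoeff (AddCircle.liftIco P a g) k := by
      unfold fourierCoeff
      refine integral_congr_ae ?_
      filter_upwards [hae] with t ht
      rw [ht]
    rw [e1, fourierCoeff_eq_intervalIntegral _ k a]
    rw [intervalIntegral.integral_of_le (by linarith : a ≤ a + P)]
    have e2 : ∫ x in Set.Ioc a (a + P), fourier (-k) (x : AddCircle P) • AddCircle.liftIco P a g x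
        = ∫ x in Set.Ioc a (a + P), fourier (-k) (x : AddCircle P) • g x := by
      refine setIntegral_congr_ae measurableSet_Ioc ?_
      filter_upwards [hae_ne] with x hx hx'
      have hmem : x ∈ Set.Ico a (a + P) := ⟨hx'.1.le, lt_of_le_of_ne hx'.2 hx⟩
      rw [AddCircle.liftIco_coe_apply hmem]
    rw [e2]
    have e3 : ∫ x in Set.Ioc a (a + P), fourier (-k) (x : AddCircle P) • g x
        = ∫ x : ℝ, fourier (-k) (x : AddCircle P) • g x := by
      apply setIntegral_eq_integral_of_forall_compl_eq_zero
      intro x hx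
      rw [hg0 x hx, smul_zero]
    rw [e3, Real.fourier_eq']
    have hsm : ((1 : ℝ) / P) • (∫ x : ℝ, fourier (-k) (x : AddCircle P) • g x)
        = ((1 / P : ℝ) : ℂ) * ∫ x : ℝ, fourier (-k) (x : AddCircle P) • g x := by
      rw [Complex.real_smul]
    rw [hsm]
    push_cast
    rw [← integral_const_mul]
    rw [← integral_const_mul]
    refine integral_congr_ae (ae_of_all _ fun x => ?_)
    simp only [smul_eq_mul, RCLike.inner_apply, starRingEnd_apply, star_trivial]
    congr 1
    rw [fourier_coe_apply]
    congr 1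
    push_cast
    have hPne : (P : ℂ) ≠ 0 := by exact_mod_cast hP0.ne'
    field_simp
  have hpars := tsum_sq_fourierCoeff L
  simp only [hcoeff] at hpars
  have hrhs : (∫ t : AddCircle P, ‖L t‖ ^ 2 ∂(@AddCircle.haarAddCircle P _))
      = (1 / P) * ∫ x : ℝ, (f x) ^ 2 := by
    have e1 : (∫ t : AddCircle P, ‖L t‖ ^ 2 ∂(@AddCircle.haarAddCircle P _))
        = ∫ t : AddCircle P, ‖AddCircle.liftIco P a g t‖ ^ 2 ∂(@AddCircle.haarAddCircle P _) := by
      refine integral_congr_ae ?_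
      filter_upwards [hae] with t ht
      rw [ht]
    have e2 : (∫ t : AddCircle P, ‖AddCircle.liftIco P a g t‖ ^ 2) =
        P * ∫ t : AddCircle P, ‖AddCircle.liftIco P a g t‖ ^ 2 ∂(@AddCircle.haarAddCircle P _) := by
      rw [AddCircle.volume_eq_smul_haarAddCircle, integral_smul_measure,
        ENNReal.toReal_ofReal hP0.le, smul_eq_mul]
    have e3 : (∫ t : AddCircle P, ‖AddCircle.liftIco P a g t‖ ^ 2)
        = ∫ x in Set.Ioc a (a + P), ‖AddCircle.liftIco P a g (x : AddCircle P)‖ ^ 2 :=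
      (AddCircle.integral_preimage P a _).symm
    have e4 : (∫ x in Set.Ioc a (a + P), ‖AddCircle.liftIco P a g (x : AddCircle P)‖ ^ 2)
        = ∫ x in Set.Ioc a (a + P), (f x) ^ 2 := by
      refine setIntegral_congr_ae measurableSet_Ioc ?_
      filter_upwards [hae_ne] with x hx hx'
      have hmem : x ∈ Set.Ico a (a + P) := ⟨hx'.1.le, lt_of_le_of_ne hx'.2 hx⟩
      rw [AddCircle.liftIco_coe_apply hmem]
      simp only [hg, Complex.norm_real, Real.norm_eq_abs, _root_.sq_abs]
    have e5 : (∫ x in Set.Ioc a (a + P), (f x) ^ 2) = ∫ x : ℝ, (f x) ^ 2 := by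
      apply setIntegral_eq_integral_of_forall_compl_eq_zero
      intro x hx
      have h0 : f x = 0 := Complex.ofReal_eq_zero.mp (hg0 x hx)
      rw [h0]; ring
    have key : P * (∫ t : AddCircle P, ‖AddCircle.liftIco P a g t‖ ^ 2
        ∂(@AddCircle.haarAddCircle P _)) = ∫ x : ℝ, (f x) ^ 2 :=
      e2.symm.trans (e3.trans (e4.trans e5))
    rw [e1, ← key, one_div, inv_mul_eq_div, mul_div_cancel_left₀ _ hP0.ne']
  rw [hrhs] at hpars
  have hnorm : ∀ k : ℤ, ‖(1 / P : ℂ) * 𝓕 g ((k : ℝ) / P)‖ ^ 2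
      = (1 / P) ^ 2 * ‖𝓕 g ((k : ℝ) / P)‖ ^ 2 := by
    intro k
    rw [norm_mul, mul_pow]
    congr 2
    simp [abs_of_pos hP0]
  simp only [hnorm] at hpars
  rw [tsum_mul_left] at hpars
  rw [one_div, inv_pow, inv_mul_eq_iff_eq_mul₀ (by positivity : (P:ℝ)^2 ≠ 0)] at hpars
  rw [hpars, sq, mul_assoc, ← mul_assoc P P⁻¹, mul_inv_cancel₀ hP0.ne', one_mul]

lemma plancherel_core (g : ℝ → ℂ) (hgc : Continuous g) (hgs : HasCompactSupport g)
    (hreal : ∀ x, (starRingEnd ℂ) (g x) = g x)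
    (hFi : Integrable (fun ξ : ℝ => ‖𝓕 g ξ‖ ^ 2)) :
    ((∫ ξ : ℝ, ‖𝓕 g ξ‖ ^ 2 : ℝ) : ℂ) = ∫ x : ℝ, g x * g x := by
  obtain ⟨H, hHc, hHs, hHapp⟩ : ∃ H : ℝ → ℂ, Continuous H ∧ HasCompactSupport H ∧
      ∀ u, H u = ∫ t : ℝ, g t * g (t - u) := by
    have hgnc : Continuous (fun x => g (-x)) := hgc.comp continuous_neg
    have hgns : HasCompactSupport (fun x => g (-x)) := hgs.comp_homeomorph (Homeomorph.neg ℝ)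
    refine ⟨g ⋆[ContinuousLinearMap.mul ℂ ℂ] (fun x => g (-x)), ?_, ?_, ?_⟩
    · exact hgns.continuous_convolution_right _ hgc.locallyIntegrable hgnc
    · exact hgs.convolution _ hgns
    · intro u
      rw [convolution_def]
      simp only [ContinuousLinearMap.mul_apply', neg_sub]
  have hHint : Integrable H := hHc.integrable_of_hasCompactSupport hHs
  have hH0 : H 0 = ∫ x : ℝ, g x * g x := by
    rw [hHapp 0]
    refine integral_congr_ae (ae_of_all _ fun t => ?_)
    show g t * g (t - 0) = g t * g t
    rw [sub_zero]
  have key : ∀ ξ : ℝ, 𝓕 H ξ = ((‖𝓕 g ξ‖ ^ 2 : ℝ) : ℂ) := by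
    intro ξ
    set e : ℝ → ℂ := fun t => Complex.exp ((-2 * π * (t * ξ) : ℝ) * Complex.I) with he
    have heapp : ∀ t, e t = Complex.exp ((-2 * π * (t * ξ) : ℝ) * Complex.I) := fun t => rfl
    have hec : Continuous e := by
      apply Complex.continuous_exp.comp
      continuity
    have hΨc : Continuous (fun p : ℝ × ℝ => e p.1 * (g p.2 * g (p.2 - p.1))) := by
      apply (hec.comp continuous_fst).mul
      exact ((hgc.comp continuous_snd).mul (hgc.comp (continuous_snd.sub continuous_fst)))
    have hΨs : HasCompactSupport (fun p : ℝ × ℝ => e p.1 * (g p.2 * g (p.2 - p.1))) := by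
      have hKc : IsCompact (tsupport g) := hgs
      have hKK : IsCompact ((tsupport g + -tsupport g) ×ˢ tsupport g : Set (ℝ × ℝ)) :=
        (hKc.add hKc.neg).prod hKc
      refine IsCompact.of_isClosed_subset hKK (isClosed_tsupport _)
        (closure_minimal ?_ hKK.isClosed)
      intro p hp
      simp only [Function.mem_support] at hp
      have h2 : g p.2 ≠ 0 := fun h0 => hp (by rw [h0]; ring)
      have h3 : g (p.2 - p.1) ≠ 0 := fun h0 => hp (by rw [h0]; ring)
      refine ⟨⟨p.2, subset_tsupport g h2, -(p.2 - p.1), ?_, by ring⟩, subset_tsupport g h2⟩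
      rw [Set.mem_neg, neg_neg]
      exact subset_tsupport g h3
    have hΨi : Integrable (fun p : ℝ × ℝ => e p.1 * (g p.2 * g (p.2 - p.1))) :=
      hΨc.integrable_of_hasCompactSupport hΨs
    have hC : (∫ v : ℝ, Complex.exp ((2 * π * (v * ξ) : ℝ) * Complex.I) * g v)
        = (starRingEnd ℂ) (𝓕 g ξ) := by
      rw [fourierIntegral_eq_real, ← integral_conj]
      refine integral_congr_ae (ae_of_all _ fun v => ?_)
      show Complex.exp ((2 * π * (v * ξ) : ℝ) * Complex.I) * g v
        = (starRingEnd ℂ) (Complex.exp ((-2 * π * (v * ξ) : ℝ) * Complex.I) * g v)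
      rw [map_mul, ← Complex.exp_conj, map_mul, Complex.conj_I, Complex.conj_ofReal, hreal v]
      congr 2
      push_cast
      ring
    calc 𝓕 H ξ
        = ∫ u : ℝ, e u * H u := fourierIntegral_eq_real H ξ
      _ = ∫ u : ℝ, ∫ t : ℝ, e u * (g t * g (t - u)) := by
          refine integral_congr_ae (ae_of_all _ fun u => ?_)
          show e u * H u = ∫ t : ℝ, e u * (g t * g (t - u))
          rw [hHapp u, integral_const_mul]
      _ = ∫ t : ℝ, ∫ u : ℝ, e u * (g t * g (t - u)) := integral_integral_swap hΨi
      _ = ∫ t : ℝ, g t * ∫ u : ℝ, e u * g (t - u) := by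
          refine integral_congr_ae (ae_of_all _ fun t => ?_)
          show (∫ u : ℝ, e u * (g t * g (t - u))) = g t * ∫ u : ℝ, e u * g (t - u)
          rw [← integral_const_mul (g t) (fun u => e u * g (t - u))]
          refine integral_congr_ae (ae_of_all _ fun u => ?_)
          show e u * (g t * g (t - u)) = g t * (e u * g (t - u))
          ring
      _ = ∫ t : ℝ, g t * ∫ v : ℝ, e (t - v) * g v := by
          refine integral_congr_ae (ae_of_all _ fun t => ?_)
          show g t * (∫ u : ℝ, e u * g (t - u)) = g t * ∫ v : ℝ, e (t - v) * g v
          congr 1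
          have h := integral_sub_left_eq_self (fun v => e (t - v) * g v) volume t
          rw [← h]
          refine integral_congr_ae (ae_of_all _ fun u => ?_)
          show e u * g (t - u) = e (t - (t - u)) * g (t - u)
          rw [sub_sub_cancel]
      _ = ∫ t : ℝ, (e t * g t) *
            ∫ v : ℝ, Complex.exp ((2 * π * (v * ξ) : ℝ) * Complex.I) * g v := by
          refine integral_congr_ae (ae_of_all _ fun t => ?_)
          show g t * (∫ v : ℝ, e (t - v) * g v) = (e t * g t) *
            ∫ v : ℝ, Complex.exp ((2 * π * (v * ξ) : ℝ) * Complex.I) * g v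
          rw [← integral_const_mul (g t) (fun v => e (t - v) * g v),
            ← integral_const_mul (e t * g t)
              (fun v => Complex.exp ((2 * π * (v * ξ) : ℝ) * Complex.I) * g v)]
          refine integral_congr_ae (ae_of_all _ fun v => ?_)
          show g t * (e (t - v) * g v)
            = (e t * g t) * (Complex.exp ((2 * π * (v * ξ) : ℝ) * Complex.I) * g v)
          have hetv : e (t - v) = e t * Complex.exp ((2 * π * (v * ξ) : ℝ) * Complex.I) := by
            rw [heapp, heapp, ← Complex.exp_add]
            congr 1
            push_cast
            ring
          rw [hetv]
          ring
      _ = (starRingEnd ℂ) (𝓕 g ξ) * 𝓕 g ξ := by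
          rw [integral_mul_const, hC, mul_comm]
          congr 1
          exact (fourierIntegral_eq_real g ξ).symm
      _ = ((‖𝓕 g ξ‖ ^ 2 : ℝ) : ℂ) := by
          rw [mul_comm, Complex.mul_conj, Complex.normSq_eq_norm_sq]
  have h𝓕H : Integrable (𝓕 H) := by
    have heq : 𝓕 H = fun ξ => ((‖𝓕 g ξ‖ ^ 2 : ℝ) : ℂ) :=
      funext key
    rw [heq]
    exact hFi.ofReal
  have hinv := hHint.fourierInv_fourier_eq h𝓕H (hHc.continuousAt (x := 0))
  have hfinal : (∫ ξ : ℝ, 𝓕 H ξ) = H 0 := by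
    rw [← hinv, Real.fourierInv_eq]
    refine integral_congr_ae (ae_of_all _ fun ξ => ?_)
    norm_num
  rw [hH0] at hfinal
  have hlhs : (∫ ξ : ℝ, 𝓕 H ξ)
      = ((∫ ξ : ℝ, ‖𝓕 g ξ‖ ^ 2 : ℝ) : ℂ) := by
    have h2 : (∫ ξ : ℝ, ((‖𝓕 g ξ‖ ^ 2 : ℝ) : ℂ))
        = ((∫ ξ : ℝ, ‖𝓕 g ξ‖ ^ 2 : ℝ) : ℂ) := integral_ofReal
    rw [← h2]
    exact integral_congr_ae (ae_of_all _ fun ξ => key ξ)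
  rw [hlhs] at hfinal
  exact hfinal

lemma plancherel_aux (f : ℝ → ℝ) (hf : Continuous f) (hsupp : HasCompactSupport f)
    (hFi : Integrable (fun ξ : ℝ => ‖𝓕 (fun x => (f x : ℂ)) ξ‖ ^ 2)) :
    ∫ ξ : ℝ, ‖𝓕 (fun x => (f x : ℂ)) ξ‖ ^ 2 = ∫ x : ℝ, (f x) ^ 2 := by
  have hgc : Continuous (fun x => (f x : ℂ)) := Complex.continuous_ofReal.comp hf
  have hgs : HasCompactSupport (fun x => (f x : ℂ)) := hsupp.comp_left Complex.ofReal_zero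
  have hreal : ∀ x : ℝ, (starRingEnd ℂ) ((f x : ℂ)) = (f x : ℂ) := fun x => Complex.conj_ofReal _
  have h := plancherel_core (fun x => (f x : ℂ)) hgc hgs hreal hFi
  have h2 : (∫ x : ℝ, ((f x : ℂ)) * ((f x : ℂ))) = ((∫ x : ℝ, (f x) ^ 2 : ℝ) : ℂ) := by
    have h3 : (∫ x : ℝ, (((f x) ^ 2 : ℝ) : ℂ)) = ((∫ x : ℝ, (f x) ^ 2 : ℝ) : ℂ) := integral_ofReal
    rw [← h3]
    refine integral_congr_ae (ae_of_all _ fun x => ?_)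
    push_cast
    ring
  rw [h2] at h
  exact_mod_cast h

lemma main_eq (f : ℝ → ℝ) (hf : Continuous f) (R : ℝ) (hR : 0 < R)
    (hsub : ∀ x : ℝ, x ∉ Set.Icc (-R) R → f x = 0)
    (hFi : Integrable (fun ξ : ℝ => ‖𝓕 (fun x => (f x : ℂ)) ξ‖ ^ 2))
    (hsupp : HasCompactSupport f)
    (T : ℝ) (hT0 : 0 < T) (hT : 2 * R + 2 ≤ T * (2 * Real.pi)) :
    (1 / T) * ∑' k : ℤ, (‖fourierT f ((k : ℝ) / T)‖) ^ 2
      = ∫ ξ : ℝ, (‖fourierT f ξ‖) ^ 2 := by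
  have hπ : (0 : ℝ) < 2 * Real.pi := by positivity
  have hI2 := plancherel_aux f hf hsupp hFi
  -- sum side
  have hsum : ∑' k : ℤ, (‖fourierT f ((k : ℝ) / T)‖) ^ 2
      = (1 / (2 * Real.pi)) ^ 2 * ((T * (2 * Real.pi)) * ∫ x : ℝ, (f x) ^ 2) := by
    have h1 : ∀ k : ℤ, (‖fourierT f ((k : ℝ) / T)‖) ^ 2
        = (1 / (2 * Real.pi)) ^ 2
          * ‖𝓕 (fun x => (f x : ℂ)) ((k : ℝ) / (T * (2 * Real.pi)))‖ ^ 2 := by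
      intro k
      rw [abs_fourierT_sq, div_div]
    rw [tsum_congr h1, tsum_mul_left, parseval_sum f hf R hR hsub (T * (2 * Real.pi)) hT]
  -- integral side
  have hint2 : ∫ ξ : ℝ, (‖fourierT f ξ‖) ^ 2
      = (1 / (2 * Real.pi)) ^ 2 * ((2 * Real.pi) * ∫ x : ℝ, (f x) ^ 2) := by
    have h1 : ∫ ξ : ℝ, (‖fourierT f ξ‖) ^ 2
        = ∫ ξ : ℝ, (1 / (2 * Real.pi)) ^ 2
            * ‖𝓕 (fun x => (f x : ℂ)) (ξ / (2 * Real.pi))‖ ^ 2 :=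
      integral_congr_ae (ae_of_all _ fun ξ => abs_fourierT_sq f ξ)
    rw [h1, integral_const_mul]
    congr 1
    have h2 := MeasureTheory.Measure.integral_comp_div
      (fun ξ : ℝ => ‖𝓕 (fun x => (f x : ℂ)) ξ‖ ^ 2) (2 * Real.pi)
    rw [h2, abs_of_pos hπ, smul_eq_mul, hI2]
  rw [hsum, hint2]
  field_simp

end Aux

/-- Riemann sum convergence: `(1/n^{1-α}) ∑_{k ∈ ℤ} |F f(k/n^{1-α})|² → ∫ |F f(ξ)|² dξ`. -/
theorem stmt_4 (f : ℝ → ℝ) (hf : Continuous f) (hsupp : HasCompactSupport f)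
    (hFc : Continuous (fourierT f)) (α : ℝ) (hα0 : 0 < α) (hα1 : α < 1)
    (hint : Integrable (fun ξ : ℝ => (‖fourierT f ξ‖)^2 * (1 + |ξ|))) :
    Tendsto (fun n : ℕ =>
        (1 / (n : ℝ) ^ (1 - α)) *
          ∑' k : ℤ, (‖fourierT f ((k : ℝ) / (n : ℝ) ^ (1 - α))‖) ^ 2)
      atTop (𝓝 (∫ ξ : ℝ, (‖fourierT f ξ‖) ^ 2)) := by
  -- support bound
  obtain ⟨r, hr⟩ := hsupp.isCompact.isBounded.subset_closedBall 0
  set R : ℝ := max r 1 with hRdef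
  have hR : 0 < R := lt_of_lt_of_le one_pos (le_max_right _ _)
  have hsub : ∀ x : ℝ, x ∉ Set.Icc (-R) R → f x = 0 := by
    intro x hx
    apply image_eq_zero_of_notMem_tsupport
    intro hxt
    apply hx
    have := hr hxt
    rw [Metric.mem_closedBall, Real.dist_eq, sub_zero] at this
    have h1 : |x| ≤ R := le_trans this (le_max_left _ _)
    exact ⟨neg_le_of_abs_le h1, le_of_abs_le h1⟩
  -- integrability
  have hintg : Integrable (fun ξ : ℝ => (‖fourierT f ξ‖) ^ 2) := by
    refine hint.mono ?_ (ae_of_all _ fun ξ => ?_)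
    · exact ((continuous_norm.comp hFc).pow 2).aestronglyMeasurable
    · have h0 : (0:ℝ) ≤ ‖fourierT f ξ‖ ^ 2 := by positivity
      have h1 : (0:ℝ) ≤ ‖fourierT f ξ‖ ^ 2 * (1 + |ξ|) := by positivity
      rw [Real.norm_eq_abs, Real.norm_eq_abs, _root_.abs_of_nonneg h0, _root_.abs_of_nonneg h1]
      nlinarith [abs_nonneg ξ]
  have hFi : Integrable (fun ξ : ℝ => ‖FourierTransform.fourier (fun x => (f x : ℂ)) ξ‖ ^ 2) := by
    have hπ : (2 * Real.pi : ℝ) ≠ 0 := by positivity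
    have heq : (fun ξ : ℝ => ‖FourierTransform.fourier (fun x => (f x : ℂ)) ξ‖ ^ 2)
        = fun ξ : ℝ => (2 * Real.pi) ^ 2
            * (‖fourierT f (2 * Real.pi * ξ)‖) ^ 2 := by
      funext ξ
      rw [fourierIntegral_eq_fourierT, norm_mul, mul_pow]
      congr 2
      have : (2 * Real.pi : ℂ) = ((2 * Real.pi : ℝ) : ℂ) := by push_cast; ring
      rw [this, Complex.norm_real, Real.norm_eq_abs, _root_.abs_of_pos (by positivity)]
    rw [heq]
    exact (hintg.comp_mul_left' hπ).const_mul _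
  -- eventually constant
  have htend : Tendsto (fun n : ℕ => (n : ℝ) ^ (1 - α)) atTop atTop :=
    (tendsto_rpow_atTop (by linarith : (0:ℝ) < 1 - α)).comp tendsto_natCast_atTop_atTop
  have hev : ∀ᶠ n : ℕ in atTop,
      (1 / (n : ℝ) ^ (1 - α)) *
          ∑' k : ℤ, (‖fourierT f ((k : ℝ) / (n : ℝ) ^ (1 - α))‖) ^ 2
        = ∫ ξ : ℝ, (‖fourierT f ξ‖) ^ 2 := by
    filter_upwards [htend.eventually_ge_atTop (max 1 ((2 * R + 2) / (2 * Real.pi)))] with n hn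
    have hπ : (0 : ℝ) < 2 * Real.pi := by positivity
    have hT0 : 0 < (n : ℝ) ^ (1 - α) := lt_of_lt_of_le one_pos ((le_max_left _ _).trans hn)
    have hT : 2 * R + 2 ≤ (n : ℝ) ^ (1 - α) * (2 * Real.pi) := by
      have h1 : (2 * R + 2) / (2 * Real.pi) ≤ (n : ℝ) ^ (1 - α) := (le_max_right _ _).trans hn
      calc 2 * R + 2 = ((2 * R + 2) / (2 * Real.pi)) * (2 * Real.pi) := by field_simp
        _ ≤ (n : ℝ) ^ (1 - α) * (2 * Real.pi) := by
            exact mul_le_mul_of_nonneg_right h1 hπ.le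
    exact main_eq f hf R hR hsub hFi hsupp ((n : ℝ) ^ (1 - α)) hT0 hT
  exact Tendsto.congr' (by filter_upwards [hev] with n hn; rw [hn]) tendsto_const_nhds
end

section
/- Let f : ℝ → ℝ be continuous with compact support, F f continuous, and ∫_ℝ |F f(ξ)|²(1+|ξ|) dξ < ∞. Fix 0 < α < 1. For each M > 0, if N_n ≥ M n^{1-α} eventually, then limsup_n (1/n^{1-α}) ∑_{|k| > N_n} |F f(k / n^{1-α})|² ≤ ∫_{|ξ| > M} |F f(ξ)|² dξ. -/
open MeasureTheory Real Complex Filter Topology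

lemma fourierT_eq_fourierIntegral (g : ℝ → ℝ) (ω : ℝ) :
    fourierT g ω = (1 / (2 * Real.pi) : ℂ) *
      FourierTransform.fourier (fun x => (g x : ℂ)) (ω / (2 * Real.pi)) := by
  rw [fourierT, Real.fourier_real_eq_integral_exp_smul]
  congr 1
  refine integral_congr_ae (Filter.Eventually.of_forall fun x => ?_)
  simp only [smul_eq_mul]
  congr 2
  have hπ : (π:ℂ) ≠ 0 := Complex.ofReal_ne_zero.2 Real.pi_ne_zero
  push_cast
  field_simp

lemma integrable_coe_of_cts {g : ℝ → ℝ} (hg : Continuous g) (hs : HasCompactSupport g) :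
    Integrable (fun x : ℝ => (g x : ℂ)) :=
  (Continuous.integrable_of_hasCompactSupport (Complex.continuous_ofReal.comp hg)
    (hs.comp_left (g := fun y : ℝ => (y : ℂ)) rfl))

lemma continuous_fourierT_of {g : ℝ → ℝ} (hg : Continuous g) (hs : HasCompactSupport g) :
    Continuous (fourierT g) := by
  have h1 : Continuous (FourierTransform.fourier (fun x => (g x : ℂ))) :=
    VectorFourier.fourierIntegral_continuous Real.continuous_fourierChar
      (by exact continuous_inner) (integrable_coe_of_cts hg hs)
  have : Continuous fun ω : ℝ => (1 / (2 * Real.pi) : ℂ) *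
      FourierTransform.fourier (fun x => (g x : ℂ)) (ω / (2 * Real.pi)) := by
    exact (continuous_const.mul (h1.comp (continuous_id.div_const _)))
  exact (funext fun ω => fourierT_eq_fourierIntegral g ω) ▸ this

lemma hasDerivAt_fourierT {g : ℝ → ℝ} (hg : Continuous g) (hs : HasCompactSupport g) (ω : ℝ) :
    HasDerivAt (fourierT g) (-Complex.I * fourierT (fun x => x * g x) ω) ω := by
  have hint : Integrable (fun x : ℝ => (g x : ℂ)) := integrable_coe_of_cts hg hs
  have hint' : Integrable (fun x : ℝ => x • (g x : ℂ)) := by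
    have hc : Continuous (fun x : ℝ => x • (g x : ℂ)) :=
      continuous_id.smul (Complex.continuous_ofReal.comp hg)
    exact hc.integrable_of_hasCompactSupport
      ((hs.comp_left (g := fun y : ℝ => (y:ℂ)) rfl).smul_left (f := fun x : ℝ => x))
  have key := Real.hasDerivAt_fourier hint hint' (ω / (2*Real.pi))
  have hπ : (Real.pi:ℂ) ≠ 0 := Complex.ofReal_ne_zero.2 Real.pi_ne_zero
  have hinner : HasDerivAt (fun w : ℝ => w / (2*Real.pi)) (1/(2*Real.pi)) ω := by
    simpa using (hasDerivAt_id ω).div_const (2*Real.pi)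
  have comp := key.scomp ω hinner
  have final := comp.const_mul (1/(2*Real.pi) : ℂ)
  have hfun : (fun w : ℝ => (1/(2*Real.pi):ℂ) *
      FourierTransform.fourier (fun x => (g x:ℂ)) (w/(2*Real.pi))) = fourierT g :=
    funext fun w => (fourierT_eq_fourierIntegral g w).symm
  simp only [Function.comp_def] at final
  rw [hfun] at final
  refine final.congr_deriv ?_
  symm
  have hD : FourierTransform.fourier (fun x : ℝ => (-2*Real.pi*Complex.I*x) • (g x:ℂ))
      (ω/(2*Real.pi))
      = (-2*Real.pi*Complex.I) *
        FourierTransform.fourier (fun x : ℝ => ((x * g x : ℝ) : ℂ)) (ω/(2*Real.pi)) := by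
    rw [Real.fourier_real_eq_integral_exp_smul,
      Real.fourier_real_eq_integral_exp_smul, ← integral_const_mul]
    refine integral_congr_ae (Filter.Eventually.of_forall fun x => ?_)
    simp only [smul_eq_mul]
    push_cast
    ring
  rw [hD]
  have h2 : FourierTransform.fourier (fun x : ℝ => ((x * g x : ℝ) : ℂ)) (ω/(2*Real.pi))
      = (2*Real.pi) * fourierT (fun x => x * g x) ω := by
    rw [fourierT_eq_fourierIntegral]
    field_simp
  rw [h2, Complex.real_smul]
  push_cast
  field_simp

/-- Orthogonality of exponentials on `[-L, L]` with `L = π/h`. -/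
lemma ortho {h : ℝ} (hh : 0 < h) (k j : ℤ) (t : ℝ) :
    ∫ x in (-(Real.pi/h))..(Real.pi/h),
        Complex.exp ((t + k*h) * x * Complex.I) * (starRingEnd ℂ) (Complex.exp ((t + j*h) * x * Complex.I))
      = if k = j then ((2 * (Real.pi/h) : ℝ) : ℂ) else 0 := by
  have hh' : (h:ℂ) ≠ 0 := Complex.ofReal_ne_zero.2 hh.ne'
  have hpt : ∀ x : ℝ, Complex.exp ((t + k*h) * x * Complex.I) *
      (starRingEnd ℂ) (Complex.exp ((t + j*h) * x * Complex.I))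
      = Complex.exp ((((k - j : ℤ) * h : ℝ) * Complex.I) * x) := by
    intro x
    rw [← Complex.exp_conj, ← Complex.exp_add]
    congr 1
    simp only [map_mul, map_add, Complex.conj_I, Complex.conj_ofReal, map_intCast]
    push_cast
    ring
  simp only [hpt]
  rcases eq_or_ne k j with rfl | hkj
  · simp only [if_pos rfl, sub_self, Int.cast_zero, zero_mul, Complex.ofReal_zero,
      Complex.exp_zero, intervalIntegral.integral_const, smul_eq_mul, mul_one]
    rw [sub_neg_eq_add, Complex.real_smul]
    push_cast
    ring
  · rw [if_neg hkj]
    have hc : (((k - j : ℤ) * h : ℝ) : ℂ) * Complex.I ≠ 0 := by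
      apply mul_ne_zero _ Complex.I_ne_zero
      rw [Complex.ofReal_ne_zero]
      exact mul_ne_zero (Int.cast_ne_zero.2 (sub_ne_zero.2 hkj)) hh.ne'
    rw [integral_exp_mul_complex hc]
    have h1 : (((k - j : ℤ) * h : ℝ) : ℂ) * Complex.I * ((Real.pi/h : ℝ) : ℂ)
        = ((k - j : ℤ) : ℂ) * (Real.pi * Complex.I) := by
      push_cast
      field_simp
    have h2 : (((k - j : ℤ) * h : ℝ) : ℂ) * Complex.I * ((-(Real.pi/h) : ℝ) : ℂ)
        = ((-(k - j) : ℤ) : ℂ) * (Real.pi * Complex.I) := by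
      push_cast
      field_simp
    rw [h1, h2, Complex.exp_int_mul, Complex.exp_int_mul, Complex.exp_pi_mul_I]
    have hmm : ((-1:ℂ)) ^ (k - j) * ((-1:ℂ)) ^ (k - j) = 1 := by
      rw [← mul_zpow]
      norm_num
    rw [zpow_neg, inv_eq_of_mul_eq_one_right hmm, sub_self, zero_div]

lemma bessel {g : ℝ → ℝ} (hg : Continuous g) {A : ℝ}
    (hsupp : ∀ x : ℝ, A ≤ |x| → g x = 0) {h : ℝ} (hh : 0 < h) (hhA : h * A < Real.pi)
    (hgint : Integrable (fun x : ℝ => (g x)^2))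
    (t : ℝ) (s : Finset ℤ) :
    ∑ k ∈ s, Complex.normSq (fourierT g (t + k*h))
      ≤ (1/(2*Real.pi*h)) * ∫ x : ℝ, (g x)^2 := by
  have hπ : (0:ℝ) < Real.pi := Real.pi_pos
  set L : ℝ := Real.pi / h with hLdef
  have hL : 0 < L := div_pos hπ hh
  have hAL : A < L := by
    rw [hLdef, lt_div_iff₀ hh]
    linarith [hhA]
  set c : ℤ → ℂ := fun k => fourierT g (t + k*h) with hcdef
  set e : ℤ → ℝ → ℂ := fun k x => Complex.exp ((t + k*h) * x * Complex.I) with hedef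
  have hec : ∀ k : ℤ, Continuous (e k) := by
    intro k
    exact ((continuous_const.mul Complex.continuous_ofReal).mul continuous_const).cexp
  set P : ℝ → ℂ := fun x => ∑ k ∈ s, (h * c k) * e k x with hPdef
  have hPc : Continuous P := continuous_finset_sum _ fun k _ => continuous_const.mul (hec k)
  -- interval integrals of compactly supported functions are full integrals
  have hfull : ∀ F : ℝ → ℂ, (∀ x, g x = 0 → F x = 0) →
      (∫ x in (-L)..L, F x) = ∫ x : ℝ, F x := by
    intro F hF
    apply intervalIntegral.integral_eq_integral_of_support_subset
    intro x hx
    rw [Set.mem_Ioc]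
    by_contra hxn
    push_neg at hxn
    have hAx : A ≤ |x| := by
      rcases le_or_gt x (-L) with hc1 | hc2
      · have := neg_le_abs x
        linarith
      · have := hxn hc2
        have := le_abs_self x
        linarith
    exact hx (hF x (hsupp x hAx))
  have conj_interval : ∀ F : ℝ → ℂ,
      (∫ x in (-L)..L, (starRingEnd ℂ) (F x)) = (starRingEnd ℂ) (∫ x in (-L)..L, F x) := by
    intro F
    rw [intervalIntegral, intervalIntegral, integral_conj, integral_conj, ← map_sub]
  have stepA : ∀ ω : ℝ,
      (∫ x in (-L)..L, Complex.exp (-(x*ω) * Complex.I) * (g x:ℂ)) = (2*Real.pi) * fourierT g ω := by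
    intro ω
    rw [hfull _ (fun x hx => by rw [hx]; simp), fourierT]
    have h2π : (2*(Real.pi:ℂ)) ≠ 0 := by
      have : (Real.pi:ℂ) ≠ 0 := Complex.ofReal_ne_zero.2 Real.pi_ne_zero
      simpa using this
    rw [← mul_assoc, mul_one_div, div_self h2π, one_mul]
  have stepB : ∀ k : ℤ,
      (∫ x in (-L)..L, (g x:ℂ) * e k x) = (2*Real.pi) * (starRingEnd ℂ) (c k) := by
    intro k
    have hpt : ∀ x : ℝ, (g x:ℂ) * e k x
        = (starRingEnd ℂ) (Complex.exp (-((x:ℂ) * ((t + (k:ℝ)*h : ℝ):ℂ)) * Complex.I) * (g x:ℂ)) := by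
      intro x
      have harg : (starRingEnd ℂ) (-((x:ℂ) * ((t + (k:ℝ) * h : ℝ):ℂ)) * Complex.I)
          = ((t:ℂ) + (k:ℂ) * (h:ℂ)) * (x:ℂ) * Complex.I := by
        simp only [map_mul, map_neg, Complex.conj_I, Complex.conj_ofReal]
        push_cast
        ring
      calc (g x:ℂ) * e k x = Complex.exp (((t:ℂ) + (k:ℂ) * (h:ℂ)) * (x:ℂ) * Complex.I) * (g x:ℂ) :=
            mul_comm _ _
        _ = (starRingEnd ℂ) (Complex.exp (-((x:ℂ) * ((t + (k:ℝ)*h : ℝ):ℂ)) * Complex.I)) * (g x:ℂ) := by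
            rw [← Complex.exp_conj, harg]
        _ = (starRingEnd ℂ) (Complex.exp (-((x:ℂ) * ((t + (k:ℝ)*h : ℝ):ℂ)) * Complex.I) * (g x:ℂ)) := by
            rw [map_mul, Complex.conj_ofReal]
    simp only [hpt]
    rw [conj_interval, stepA, map_mul]
    congr 1
    simp only [map_mul, map_ofNat, Complex.conj_ofReal]
  have hgcont : Continuous fun x : ℝ => (g x : ℂ) := Complex.continuous_ofReal.comp hg
  have hconjc : ∀ j : ℤ, Continuous fun x => (starRingEnd ℂ) (e j x) :=
    fun j => Complex.continuous_conj.comp (hec j)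
  set S : ℝ := ∑ k ∈ s, Complex.normSq (c k) with hSdef
  have hI2 : (∫ x in (-L)..L, (g x:ℂ) * P x) = (((2*Real.pi*h) * S : ℝ) : ℂ) := by
    have hpt : ∀ x:ℝ, (g x:ℂ) * P x = ∑ k ∈ s, (h : ℂ) * c k * ((g x:ℂ) * e k x) := by
      intro x
      rw [hPdef, Finset.mul_sum]
      exact Finset.sum_congr rfl fun k _ => by ring
    simp only [hpt]
    rw [intervalIntegral.integral_finset_sum (f := fun k x => (h : ℂ) * c k * ((g x:ℂ) * e k x))
      (fun k _ => ((continuous_const.mul (hgcont.mul (hec k))).intervalIntegrable _ _))]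
    have hterm : ∀ k ∈ s, (∫ x in (-L)..L, (h:ℂ) * c k * ((g x:ℂ) * e k x))
        = (2*Real.pi*h : ℝ) * (Complex.normSq (c k) : ℝ) := by
      intro k _
      rw [intervalIntegral.integral_const_mul, stepB]
      push_cast
      rw [← Complex.mul_conj (c k)]
      ring
    rw [Finset.sum_congr rfl hterm, ← Finset.mul_sum, hSdef]
    push_cast
    ring
  have hI3 : (∫ x in (-L)..L, (g x:ℂ) * (starRingEnd ℂ) (P x)) = (((2*Real.pi*h) * S : ℝ) : ℂ) := by
    have hpt : ∀ x:ℝ, (g x:ℂ) * (starRingEnd ℂ) (P x) = (starRingEnd ℂ) ((g x:ℂ) * P x) := by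
      intro x
      rw [map_mul, Complex.conj_ofReal]
    simp only [hpt]
    rw [conj_interval, hI2, Complex.conj_ofReal]
  have hI4 : (∫ x in (-L)..L, P x * (starRingEnd ℂ) (P x)) = (((2*Real.pi*h) * S : ℝ) : ℂ) := by
    have hpt : ∀ x:ℝ, P x * (starRingEnd ℂ) (P x)
        = ∑ k ∈ s, ∑ j ∈ s, (((h:ℂ) * c k) * (starRingEnd ℂ) ((h:ℂ) * c j))
            * (e k x * (starRingEnd ℂ) (e j x)) := by
      intro x
      rw [hPdef, map_sum, Finset.sum_mul_sum]
      refine Finset.sum_congr rfl fun k _ => Finset.sum_congr rfl fun j _ => ?_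
      rw [map_mul]
      ring
    simp only [hpt]
    rw [intervalIntegral.integral_finset_sum (f := fun k x => ∑ j ∈ s, (((h:ℂ) * c k) * (starRingEnd ℂ) ((h:ℂ) * c j))
              * (e k x * (starRingEnd ℂ) (e j x))) (fun k _ => Continuous.intervalIntegrable
      (continuous_finset_sum _ fun j _ =>
        continuous_const.mul ((hec k).mul (hconjc j))) _ _)]
    have hterm : ∀ k ∈ s, (∫ x in (-L)..L, ∑ j ∈ s, (((h:ℂ) * c k) * (starRingEnd ℂ) ((h:ℂ) * c j))
          * (e k x * (starRingEnd ℂ) (e j x)))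
        = ((2*Real.pi*h : ℝ) : ℂ) * (Complex.normSq (c k) : ℝ) := by
      intro k hk
      rw [intervalIntegral.integral_finset_sum (f := fun j x => (((h:ℂ) * c k) * (starRingEnd ℂ) ((h:ℂ) * c j))
            * (e k x * (starRingEnd ℂ) (e j x))) (fun j _ => Continuous.intervalIntegrable
        (continuous_const.mul ((hec k).mul (hconjc j))) _ _)]
      have hj : ∀ j ∈ s, (∫ x in (-L)..L, (((h:ℂ) * c k) * (starRingEnd ℂ) ((h:ℂ) * c j))
            * (e k x * (starRingEnd ℂ) (e j x)))
          = if k = j then (((h:ℂ) * c k) * (starRingEnd ℂ) ((h:ℂ) * c k)) * ((2*L : ℝ):ℂ) else 0 := by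
        intro j _
        rw [intervalIntegral.integral_const_mul]
        rw [hedef]
        rw [ortho hh k j t]
        rcases eq_or_ne k j with rfl | hkj
        · rw [if_pos rfl, if_pos rfl, hLdef]
        · rw [if_neg hkj, if_neg hkj, mul_zero]
      rw [Finset.sum_congr rfl hj, Finset.sum_ite_eq s k, if_pos hk]
      have hLh : 2 * L = 2 * Real.pi / h := by
        rw [hLdef]; ring
      rw [map_mul, Complex.conj_ofReal, ← Complex.mul_conj (c k), hLh]
      have hh' : (h:ℂ) ≠ 0 := Complex.ofReal_ne_zero.2 hh.ne'
      push_cast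
      field_simp
    rw [Finset.sum_congr rfl hterm, ← Finset.mul_sum, hSdef]
    push_cast
    ring
  have hQ0 : 0 ≤ ∫ x in (-L)..L, Complex.normSq ((g x:ℂ) - P x) :=
    intervalIntegral.integral_nonneg (by linarith) (fun x _ => Complex.normSq_nonneg _)
  have hptE : ∀ x:ℝ, ((Complex.normSq ((g x:ℂ) - P x) : ℝ):ℂ)
      = ((((g x)^2 : ℝ)):ℂ) - ((g x:ℂ) * P x) - ((g x:ℂ) * (starRingEnd ℂ) (P x))
        + P x * (starRingEnd ℂ) (P x) := by
    intro x
    rw [← Complex.mul_conj ((g x:ℂ) - P x), map_sub, Complex.conj_ofReal]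
    push_cast
    ring
  have hexp : ((∫ x in (-L)..L, Complex.normSq ((g x:ℂ) - P x) : ℝ) : ℂ)
      = ((∫ x in (-L)..L, (g x)^2 : ℝ):ℂ) - (((2*Real.pi*h) * S : ℝ) : ℂ) := by
    rw [← intervalIntegral.integral_ofReal]
    calc (∫ x in (-L)..L, ((Complex.normSq ((g x:ℂ) - P x) : ℝ):ℂ))
        = ∫ x in (-L)..L, (((((g x)^2 : ℝ)):ℂ) - ((g x:ℂ) * P x)
            - ((g x:ℂ) * (starRingEnd ℂ) (P x)) + P x * (starRingEnd ℂ) (P x)) := by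
          exact intervalIntegral.integral_congr fun x _ => hptE x
      _ = ((∫ x in (-L)..L, (g x)^2 : ℝ):ℂ) - (((2*Real.pi*h) * S : ℝ) : ℂ) := by
          rw [intervalIntegral.integral_add, intervalIntegral.integral_sub,
            intervalIntegral.integral_sub, hI2, hI3, hI4, intervalIntegral.integral_ofReal]
          · push_cast; ring
          · exact ((Complex.continuous_ofReal.comp (hg.pow 2)).intervalIntegrable _ _)
          · exact ((hgcont.mul hPc).intervalIntegrable _ _)
          · exact (((Complex.continuous_ofReal.comp (hg.pow 2)).sub
              (hgcont.mul hPc)).intervalIntegrable _ _)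
          · exact ((hgcont.mul (Complex.continuous_conj.comp hPc)).intervalIntegrable _ _)
          · exact ((((Complex.continuous_ofReal.comp (hg.pow 2)).sub (hgcont.mul hPc)).sub
              (hgcont.mul (Complex.continuous_conj.comp hPc))).intervalIntegrable _ _)
          · exact ((hPc.mul (Complex.continuous_conj.comp hPc)).intervalIntegrable _ _)
  rw [← Complex.ofReal_sub] at hexp
  have hreal := Complex.ofReal_inj.1 hexp
  have hIle : (∫ x in (-L)..L, (g x)^2) ≤ ∫ x : ℝ, (g x)^2 := by
    rw [intervalIntegral.integral_of_le (by linarith)]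
    exact setIntegral_le_integral hgint (Filter.Eventually.of_forall fun x => sq_nonneg _)
  have h2πh : (0:ℝ) < 2*Real.pi*h := by positivity
  have hfin : 2*Real.pi*h * S ≤ ∫ x : ℝ, (g x)^2 := by
    have : 2*Real.pi*h * S ≤ ∫ x in (-L)..L, (g x)^2 := by linarith [hQ0, hreal]
    linarith
  rw [one_div, inv_mul_eq_div, le_div_iff₀ h2πh]
  calc S * (2*Real.pi*h) = 2*Real.pi*h*S := by ring
    _ ≤ _ := hfin

lemma integrable_normSq_fourierT {g : ℝ → ℝ} (hg : Continuous g) (hs : HasCompactSupport g) :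
    Integrable (fun ξ : ℝ => Complex.normSq (fourierT g ξ)) := by
  -- support bound
  obtain ⟨r, hr⟩ : ∃ r : ℝ, tsupport g ⊆ Metric.closedBall 0 r :=
    hs.isCompact.isBounded.subset_closedBall 0
  set A : ℝ := |r| + 1 with hAdef
  have hA : 0 < A := by positivity
  have hsupp : ∀ x : ℝ, A ≤ |x| → g x = 0 := by
    intro x hx
    by_contra hgx
    have hx2 : x ∈ tsupport g := subset_tsupport g hgx
    have := hr hx2
    rw [Metric.mem_closedBall, Real.dist_eq, sub_zero] at this
    have : |x| ≤ |r| := this.trans (le_abs_self r)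
    simp only [hAdef] at hx
    linarith
  set h : ℝ := Real.pi / (A + 1) with hhdef
  have hh : 0 < h := by positivity
  have hhA : h * A < Real.pi := by
    rw [hhdef, div_mul_eq_mul_div, div_lt_iff₀ (by positivity)]
    nlinarith [Real.pi_pos]
  have hgint : Integrable (fun x : ℝ => (g x)^2) :=
    Continuous.integrable_of_hasCompactSupport (f := fun x => (g x)^2) (hg.pow 2) (hs.comp_left (g := fun y : ℝ => y^2) (by simp))
  set C : ℝ := (1/(2*Real.pi*h)) * ∫ x : ℝ, (g x)^2 with hCdef
  have hC0 : 0 ≤ C := by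
    rw [hCdef]
    apply mul_nonneg (by positivity)
    exact integral_nonneg fun x => sq_nonneg _
  -- pointwise lattice bound from Bessel
  have hlat : ∀ (t : ℝ) (F : Finset ℤ), ∑ k ∈ F, Complex.normSq (fourierT g (t + k*h)) ≤ C :=
    fun t F => bessel hg hsupp hh hhA hgint t F
  have hcont : Continuous (fun ξ : ℝ => Complex.normSq (fourierT g ξ)) :=
    Complex.continuous_normSq.comp (continuous_fourierT_of hg hs)
  let e : ℤ ≃ AddSubgroup.zmultiples h :=
    Equiv.ofBijective (fun k => ⟨k • h, AddSubgroup.zsmul_mem _ (AddSubgroup.mem_zmultiples h) k⟩)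
      ⟨fun a b hab => (zsmul_left_strictMono hh).injective (congrArg Subtype.val hab),
       fun y => by
        obtain ⟨k, hk⟩ := AddSubgroup.mem_zmultiples_iff.1 y.2
        exact ⟨k, Subtype.ext hk⟩⟩
  constructor
  · exact hcont.aestronglyMeasurable
  · rw [hasFiniteIntegral_iff_ofReal (Filter.Eventually.of_forall fun x => Complex.normSq_nonneg _)]
    set Φ : ℝ → ENNReal := fun x => ENNReal.ofReal (Complex.normSq (fourierT g x)) with hΦ
    have hΦm : Measurable Φ := ENNReal.measurable_ofReal.comp hcont.measurable
    have fd := isAddFundamentalDomain_Ioc hh 0 (volume : Measure ℝ)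
    have key := fd.lintegral_eq_tsum' Φ
    have hswap := lintegral_tsum (μ := volume.restrict (Set.Ioc (0:ℝ) (0+h)))
        (f := fun (γ : AddSubgroup.zmultiples h) (x : ℝ) => Φ (-γ +ᵥ x))
        (fun γ => (hΦm.comp (measurable_const_add ((-γ : AddSubgroup.zmultiples h) : ℝ))).aemeasurable)
    rw [key, ← hswap]
    have hbound : ∀ x : ℝ, (∑' γ : AddSubgroup.zmultiples h, Φ (-γ +ᵥ x)) ≤ ENNReal.ofReal C := by
      intro x
      rw [← e.tsum_eq]
      have hterm : ∀ k : ℤ, Φ (-(e k) +ᵥ x)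
          = ENNReal.ofReal (Complex.normSq (fourierT g (x + ((-k : ℤ) : ℝ)*h))) := by
        intro k
        have hvadd : (-(e k) +ᵥ x : ℝ) = x + ((-k : ℤ) : ℝ)*h := by
          show ((-(e k) : AddSubgroup.zmultiples h) : ℝ) + x = _
          rw [AddSubgroup.coe_neg]
          have h1 : ((e k : ℝ)) = k • h := rfl
          rw [h1, zsmul_eq_mul]
          push_cast
          ring
        rw [hΦ]
        simp only []
        rw [hvadd]
      simp only [hterm]
      rw [ENNReal.tsum_eq_iSup_sum]
      refine iSup_le fun F => ?_
      rw [← ENNReal.ofReal_sum_of_nonneg (fun k _ => Complex.normSq_nonneg _)]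
      apply ENNReal.ofReal_le_ofReal
      have himg : ∑ k ∈ F, Complex.normSq (fourierT g (x + ((-k : ℤ) : ℝ)*h))
          = ∑ m ∈ F.image Neg.neg, Complex.normSq (fourierT g (x + (m : ℝ)*h)) := by
        rw [Finset.sum_image (fun a _ b _ hab => neg_injective hab)]
      rw [himg]
      exact hlat x _
    calc ∫⁻ x in Set.Ioc (0:ℝ) (0 + h), (∑' γ : AddSubgroup.zmultiples h, Φ (-γ +ᵥ x))
        ≤ ∫⁻ _x in Set.Ioc (0:ℝ) (0 + h), ENNReal.ofReal C :=
          lintegral_mono fun x => le_refl _ |>.trans (hbound _)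
      _ < ⊤ := by
          rw [setLIntegral_const]
          exact ENNReal.mul_lt_top ENNReal.ofReal_lt_top (by simp)

lemma interval_bound_right {G φ : ℝ → ℝ} (hGd : ∀ x, HasDerivAt G (φ x) x)
    (hφc : Continuous φ) (hGint : Integrable G) (hφint : Integrable φ)
    {a b : ℝ} (hab : a < b) :
    (b - a) * G b ≤ (∫ x in Set.Ioc a b, G x) + (b - a) * ∫ x in Set.Ioc a b, |φ x| := by
  have hptw : ∀ ξ ∈ Set.Ioc a b, G b ≤ G ξ + ∫ x in Set.Ioc a b, |φ x| := by
    intro ξ hξ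
    have hftc : ∫ x in ξ..b, φ x = G b - G ξ :=
      intervalIntegral.integral_eq_sub_of_hasDerivAt (fun x _ => hGd x)
        (hφc.intervalIntegrable _ _)
    have h1 : G b - G ξ ≤ |∫ x in ξ..b, φ x| := by
      rw [hftc]; exact le_abs_self _
    have h2 : |∫ x in ξ..b, φ x| ≤ ∫ x in ξ..b, |φ x| :=
      intervalIntegral.abs_integral_le_integral_abs hξ.2
    have h3 : (∫ x in ξ..b, |φ x|) ≤ ∫ x in Set.Ioc a b, |φ x| := by
      rw [intervalIntegral.integral_of_le hξ.2]
      apply setIntegral_mono_set hφint.abs.integrableOn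
        (Filter.Eventually.of_forall fun x => abs_nonneg _)
      exact Filter.Eventually.of_forall (Set.Ioc_subset_Ioc hξ.1.le le_rfl)
    linarith
  have hconst : (b - a) * G b = ∫ _x in Set.Ioc a b, G b := by
    rw [setIntegral_const, Real.volume_real_Ioc, max_eq_left (by linarith), smul_eq_mul]
  rw [hconst]
  have hmono : (∫ _x in Set.Ioc a b, G b)
      ≤ ∫ ξ in Set.Ioc a b, (G ξ + ∫ x in Set.Ioc a b, |φ x|) := by
    apply setIntegral_mono_on (integrableOn_const (by simp [Real.volume_Ioc]))
      (hGint.integrableOn.add (integrableOn_const (by simp [Real.volume_Ioc])))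
      measurableSet_Ioc
    exact hptw
  calc (∫ _x in Set.Ioc a b, G b) ≤ _ := hmono
    _ = (∫ ξ in Set.Ioc a b, G ξ) + (b - a) * ∫ x in Set.Ioc a b, |φ x| := by
        rw [integral_add hGint.integrableOn (integrableOn_const (by simp [Real.volume_Ioc]))]
        rw [setIntegral_const, Real.volume_real_Ioc, max_eq_left (by linarith), smul_eq_mul]

lemma interval_bound_left {G φ : ℝ → ℝ} (hGd : ∀ x, HasDerivAt G (φ x) x)
    (hφc : Continuous φ) (hGint : Integrable G) (hφint : Integrable φ)
    {a b : ℝ} (hab : a < b) :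
    (b - a) * G a ≤ (∫ x in Set.Ico a b, G x) + (b - a) * ∫ x in Set.Ico a b, |φ x| := by
  have hIcoIoc : ∀ u : ℝ → ℝ, (∫ x in Set.Ico a b, u x) = ∫ x in Set.Ioc a b, u x := by
    intro u
    rw [integral_Ico_eq_integral_Ioo, integral_Ioc_eq_integral_Ioo]
  have hptw : ∀ ξ ∈ Set.Ioc a b, G a ≤ G ξ + ∫ x in Set.Ioc a b, |φ x| := by
    intro ξ hξ
    have hftc : ∫ x in a..ξ, φ x = G ξ - G a :=
      intervalIntegral.integral_eq_sub_of_hasDerivAt (fun x _ => hGd x)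
        (hφc.intervalIntegrable _ _)
    have h1 : G a - G ξ ≤ |∫ x in a..ξ, φ x| := by
      rw [hftc]
      calc G a - G ξ = -(G ξ - G a) := by ring
        _ ≤ |G ξ - G a| := neg_le_abs _
    have h2 : |∫ x in a..ξ, φ x| ≤ ∫ x in a..ξ, |φ x| :=
      intervalIntegral.abs_integral_le_integral_abs hξ.1.le
    have h3 : (∫ x in a..ξ, |φ x|) ≤ ∫ x in Set.Ioc a b, |φ x| := by
      rw [intervalIntegral.integral_of_le hξ.1.le]
      apply setIntegral_mono_set hφint.abs.integrableOn
        (Filter.Eventually.of_forall fun x => abs_nonneg _)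
      exact Filter.Eventually.of_forall (Set.Ioc_subset_Ioc le_rfl hξ.2)
    linarith
  rw [hIcoIoc G, hIcoIoc (fun x => |φ x|)]
  have hconst : (b - a) * G a = ∫ _x in Set.Ioc a b, G a := by
    rw [setIntegral_const, Real.volume_real_Ioc, max_eq_left (by linarith), smul_eq_mul]
  rw [hconst]
  have hmono : (∫ _x in Set.Ioc a b, G a)
      ≤ ∫ ξ in Set.Ioc a b, (G ξ + ∫ x in Set.Ioc a b, |φ x|) := by
    apply setIntegral_mono_on (integrableOn_const (by simp [Real.volume_Ioc]))
      (hGint.integrableOn.add (integrableOn_const (by simp [Real.volume_Ioc])))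
      measurableSet_Ioc
    exact hptw
  calc (∫ _x in Set.Ioc a b, G a) ≤ _ := hmono
    _ = (∫ ξ in Set.Ioc a b, G ξ) + (b - a) * ∫ x in Set.Ioc a b, |φ x| := by
        rw [integral_add hGint.integrableOn (integrableOn_const (by simp [Real.volume_Ioc]))]
        rw [setIntegral_const, Real.volume_real_Ioc, max_eq_left (by linarith), smul_eq_mul]


set_option maxHeartbeats 1000000 in
/-- Tail estimate: if `N_n ≥ M n^{1-α}` eventually, then the tail of the Riemann sum of
`|F f|²` beyond `N_n` is asymptotically bounded by `∫_{|ξ|>M} |F f(ξ)|² dξ`. -/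
theorem stmt_5 (f : ℝ → ℝ) (hf : Continuous f) (hsupp : HasCompactSupport f)
    (hFc : Continuous (fourierT f))
    (hint : Integrable (fun ξ : ℝ => ‖fourierT f ξ‖^2 * (1 + |ξ|)))
    (α : ℝ) (hα0 : 0 < α) (hα1 : α < 1)
    (M : ℝ) (hM : 0 < M) (N : ℕ → ℕ)
    (hN : ∀ᶠ n : ℕ in atTop, M * (n : ℝ) ^ (1 - α) ≤ (N n : ℝ)) :
    Filter.limsup (fun n : ℕ =>
        (1 / (n : ℝ) ^ (1 - α)) *
          ∑' k : {k : ℤ // (N n : ℤ) < |k|},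
            ‖fourierT f ((k : ℤ) / (n : ℝ) ^ (1 - α))‖ ^ 2)
      atTop
      ≤ ∫ ξ in {ξ : ℝ | M < |ξ|}, ‖fourierT f ξ‖ ^ 2 := by
  classical
  set G : ℝ → ℝ := fun ξ => Complex.normSq (fourierT f ξ) with hGdef
  set g1 : ℝ → ℝ := fun x => x * f x with hg1def
  have hg1c : Continuous g1 := continuous_id.mul hf
  have hg1s : HasCompactSupport g1 := hsupp.mul_left
  set F' : ℝ → ℂ := fun ω => -Complex.I * fourierT g1 ω with hF'def
  have hF'c : Continuous F' := continuous_const.mul (continuous_fourierT_of hg1c hg1s)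
  set φ : ℝ → ℝ := fun ξ => (F' ξ).re * (fourierT f ξ).re + (fourierT f ξ).re * (F' ξ).re
      + ((F' ξ).im * (fourierT f ξ).im + (fourierT f ξ).im * (F' ξ).im) with hφdef
  have hGd : ∀ ξ : ℝ, HasDerivAt G (φ ξ) ξ := by
    intro ξ
    have hFd : HasDerivAt (fourierT f) (F' ξ) ξ := hasDerivAt_fourierT hf hsupp ξ
    have hre : HasDerivAt (fun ξ => (fourierT f ξ).re) ((F' ξ).re) ξ :=
      Complex.reCLM.hasFDerivAt.comp_hasDerivAt ξ hFd
    have him : HasDerivAt (fun ξ => (fourierT f ξ).im) ((F' ξ).im) ξ :=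
      Complex.imCLM.hasFDerivAt.comp_hasDerivAt ξ hFd
    have hGeq : G = fun ξ => (fourierT f ξ).re * (fourierT f ξ).re
        + (fourierT f ξ).im * (fourierT f ξ).im :=
      funext fun ξ => Complex.normSq_apply _
    rw [hGeq, hφdef]
    exact (hre.mul hre).add (him.mul him)
  have hφc : Continuous φ :=
    ((((Complex.continuous_re.comp hF'c).mul (Complex.continuous_re.comp hFc)).add
      ((Complex.continuous_re.comp hFc).mul (Complex.continuous_re.comp hF'c))).add
      (((Complex.continuous_im.comp hF'c).mul (Complex.continuous_im.comp hFc)).add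
      ((Complex.continuous_im.comp hFc).mul (Complex.continuous_im.comp hF'c))))
  have hGc : Continuous G := Complex.continuous_normSq.comp hFc
  have hGint : Integrable G := by
    refine hint.mono' hGc.aestronglyMeasurable (Filter.Eventually.of_forall fun ξ => ?_)
    rw [Real.norm_eq_abs, _root_.abs_of_nonneg (Complex.normSq_nonneg _), ← Complex.sq_norm]
    exact le_mul_of_one_le_right (sq_nonneg _) (by linarith [abs_nonneg ξ])
  have hF'int : Integrable (fun ξ : ℝ => Complex.normSq (F' ξ)) := by
    refine (integrable_normSq_fourierT hg1c hg1s).congr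
      (Filter.Eventually.of_forall fun ξ => ?_)
    rw [hF'def]
    simp only []
    rw [Complex.normSq_mul]
    simp
  have hφint : Integrable φ := by
    refine (hGint.add hF'int).mono' hφc.aestronglyMeasurable
      (Filter.Eventually.of_forall fun ξ => ?_)
    rw [Real.norm_eq_abs, hφdef, hGdef]
    simp only [Pi.add_apply, Complex.normSq_apply]
    rw [abs_le]
    constructor
    · nlinarith [sq_nonneg ((fourierT f ξ).re + (F' ξ).re), sq_nonneg ((fourierT f ξ).im + (F' ξ).im)]
    · nlinarith [sq_nonneg ((fourierT f ξ).re - (F' ξ).re), sq_nonneg ((fourierT f ξ).im - (F' ξ).im)]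
  set E : ℝ := ∫ ξ : ℝ, |φ ξ| with hEdef
  have hE0 : 0 ≤ E := integral_nonneg fun _ => abs_nonneg _
  set T : Set ℝ := {ξ : ℝ | M < |ξ|} with hTdef
  have hTmeas : MeasurableSet T := (isOpen_lt continuous_const _root_.continuous_abs).measurableSet
  set Aint : ℝ := ∫ ξ in T, G ξ with hAintdef
  have hAint0 : 0 ≤ Aint := setIntegral_nonneg hTmeas fun ξ _ => Complex.normSq_nonneg _
  have hA_eq : (∫ ξ in T, ‖fourierT f ξ‖^2) = Aint := by
    refine integral_congr_ae (Filter.Eventually.of_forall fun ξ => ?_)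
    exact Complex.sq_norm _
  -- the eventual bound
  have hev : ∀ᶠ n : ℕ in atTop,
      (1 / (n : ℝ) ^ (1 - α)) *
          ∑' k : {k : ℤ // (N n : ℤ) < |k|},
            ‖fourierT f ((k : ℤ) / (n : ℝ) ^ (1 - α))‖ ^ 2
        ≤ Aint + (1 / (n : ℝ) ^ (1 - α)) * E := by
    filter_upwards [hN, Filter.eventually_ge_atTop 1] with n hNn hn1
    set L : ℝ := (n : ℝ) ^ (1 - α) with hLdef
    have hnpos : (0:ℝ) < n := by exact_mod_cast Nat.lt_of_lt_of_le Nat.zero_lt_one hn1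
    have hL : 0 < L := Real.rpow_pos_of_pos hnpos _
    set hst : ℝ := 1 / L with hstdef
    have hst0 : 0 < hst := by positivity
    have hLh : L * hst = 1 := by rw [hstdef]; field_simp
    set Nn : ℝ := (N n : ℝ) with hNndef
    have hMN : M * L ≤ Nn := hNn
    set J : ℤ → Set ℝ := fun m => if 0 < m then Set.Ioc (((m:ℝ)-1)*hst) ((m:ℝ)*hst)
        else Set.Ico ((m:ℝ)*hst) (((m:ℝ)+1)*hst) with hJdef
    have hJmeas : ∀ m : ℤ, MeasurableSet (J m) := by
      intro m
      rw [hJdef]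
      dsimp only
      split_ifs
      exacts [measurableSet_Ioc, measurableSet_Ico]
    have hmpos : ∀ m : ℤ, (N n : ℤ) < |m| → 0 < m ∨ m < 0 := by
      intro m hm
      rcases lt_trichotomy 0 m with hc | hc | hc
      · exact Or.inl hc
      · exfalso; rw [← hc] at hm; simp at hm; omega
      · exact Or.inr hc
    have hsubT : ∀ m : ℤ, (N n : ℤ) < |m| → J m ⊆ T := by
      intro m hm ξ hξ
      rw [hTdef]
      simp only [Set.mem_setOf_eq]
      rw [hJdef] at hξ
      dsimp only at hξ
      rcases hmpos m hm with hpos | hneg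
      · rw [if_pos hpos] at hξ
        have hcast : Nn + 1 ≤ (m:ℝ) := by
          rw [_root_.abs_of_pos hpos] at hm
          rw [hNndef]
          exact_mod_cast Int.add_one_le_iff.2 hm
        have h1 : M ≤ ((m:ℝ)-1) * hst := by
          have h2 : M * L * hst ≤ ((m:ℝ)-1) * hst :=
            mul_le_mul_of_nonneg_right (by linarith) hst0.le
          calc M = M * (L * hst) := by rw [hLh]; ring
            _ = M * L * hst := by ring
            _ ≤ _ := h2
        have : M < ξ := lt_of_le_of_lt h1 hξ.1
        exact lt_of_lt_of_le this (le_abs_self ξ)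
      · rw [if_neg (by omega : ¬ (0:ℤ) < m)] at hξ
        have hcast : (m:ℝ) + 1 ≤ -Nn := by
          rw [_root_.abs_of_neg hneg] at hm
          rw [hNndef]
          have : m + 1 ≤ -(N n : ℤ) := by omega
          exact_mod_cast this
        have h1 : ((m:ℝ)+1) * hst ≤ -M := by
          calc ((m:ℝ)+1)*hst ≤ (-Nn) * hst := mul_le_mul_of_nonneg_right hcast hst0.le
            _ ≤ (-(M*L)) * hst := mul_le_mul_of_nonneg_right (neg_le_neg hMN) hst0.le
            _ = -(M * (L * hst)) := by ring
            _ = -M := by rw [hLh]; ring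
        have hltM : ξ < -M := lt_of_lt_of_le hξ.2 h1
        have : M < -ξ := by linarith
        exact lt_of_lt_of_le this (neg_le_abs ξ)
    have hvol : ∀ m : ℤ, (N n:ℤ) < |m| →
        G ((m:ℝ)/L) ≤ L * (∫ x in J m, G x) + ∫ x in J m, |φ x| := by
      intro m hm
      have hdivh : (m:ℝ)/L = (m:ℝ) * hst := by rw [hstdef]; ring
      rcases hmpos m hm with hpos | hneg
      · have hab : ((m:ℝ)-1)*hst < (m:ℝ)*hst := by nlinarith
        have key := interval_bound_right hGd hφc hGint hφint hab
        rw [show (m:ℝ)*hst - ((m:ℝ)-1)*hst = hst by ring] at key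
        rw [hJdef]
        dsimp only
        rw [if_pos hpos, hdivh]
        have hscaled := mul_le_mul_of_nonneg_left key hL.le
        have e1 : L * (hst * G ((m:ℝ)*hst)) = G ((m:ℝ)*hst) := by
          rw [← mul_assoc, hLh, one_mul]
        have e2 : L * ((∫ x in Set.Ioc (((m:ℝ)-1)*hst) ((m:ℝ)*hst), G x)
              + hst * ∫ x in Set.Ioc (((m:ℝ)-1)*hst) ((m:ℝ)*hst), |φ x|)
            = L * (∫ x in Set.Ioc (((m:ℝ)-1)*hst) ((m:ℝ)*hst), G x)
              + ∫ x in Set.Ioc (((m:ℝ)-1)*hst) ((m:ℝ)*hst), |φ x| := by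
          rw [mul_add, ← mul_assoc, hLh, one_mul]
        linarith
      · have hab : (m:ℝ)*hst < ((m:ℝ)+1)*hst := by nlinarith
        have key := interval_bound_left hGd hφc hGint hφint hab
        rw [show ((m:ℝ)+1)*hst - (m:ℝ)*hst = hst by ring] at key
        rw [hJdef]
        dsimp only
        rw [if_neg (by omega : ¬ (0:ℤ) < m), hdivh]
        have hscaled := mul_le_mul_of_nonneg_left key hL.le
        have e1 : L * (hst * G ((m:ℝ)*hst)) = G ((m:ℝ)*hst) := by
          rw [← mul_assoc, hLh, one_mul]
        have e2 : L * ((∫ x in Set.Ico ((m:ℝ)*hst) (((m:ℝ)+1)*hst), G x)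
              + hst * ∫ x in Set.Ico ((m:ℝ)*hst) (((m:ℝ)+1)*hst), |φ x|)
            = L * (∫ x in Set.Ico ((m:ℝ)*hst) (((m:ℝ)+1)*hst), G x)
              + ∫ x in Set.Ico ((m:ℝ)*hst) (((m:ℝ)+1)*hst), |φ x| := by
          rw [mul_add, ← mul_assoc, hLh, one_mul]
        linarith
    have hdisj : ∀ m : ℤ, (N n:ℤ) < |m| → ∀ m' : ℤ, (N n:ℤ) < |m'| → m ≠ m' →
        Disjoint (J m) (J m') := by
      have haux : ∀ m m' : ℤ, 0 < m → 0 < m' → m < m' → Disjoint (J m) (J m') := by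
        intro m m' hp hp' hlt
        rw [Set.disjoint_left]
        intro ξ h1 h2
        rw [hJdef] at h1 h2
        dsimp only at h1 h2
        rw [if_pos hp] at h1
        rw [if_pos hp'] at h2
        have hc : (m:ℝ) ≤ (m':ℝ) - 1 := by
          have : m + 1 ≤ m' := hlt
          have : ((m+1 : ℤ) : ℝ) ≤ (m' : ℝ) := by exact_mod_cast this
          push_cast at this
          linarith
        have := mul_le_mul_of_nonneg_right hc hst0.le
        have h21 := h2.1
        have h12 := h1.2
        nlinarith
      have hauxn : ∀ m m' : ℤ, m < 0 → m' < 0 → m < m' → Disjoint (J m) (J m') := by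
        intro m m' hp hp' hlt
        rw [Set.disjoint_left]
        intro ξ h1 h2
        rw [hJdef] at h1 h2
        dsimp only at h1 h2
        rw [if_neg (by omega : ¬ (0:ℤ) < m)] at h1
        rw [if_neg (by omega : ¬ (0:ℤ) < m')] at h2
        have hc : (m:ℝ) + 1 ≤ (m':ℝ) := by
          have : m + 1 ≤ m' := hlt
          exact_mod_cast this
        have := mul_le_mul_of_nonneg_right hc hst0.le
        have h21 := h2.1
        have h12 := h1.2
        nlinarith
      have hauxpn : ∀ m m' : ℤ, 0 < m → m' < 0 → Disjoint (J m) (J m') := by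
        intro m m' hp hp'
        rw [Set.disjoint_left]
        intro ξ h1 h2
        rw [hJdef] at h1 h2
        dsimp only at h1 h2
        rw [if_pos hp] at h1
        rw [if_neg (by omega : ¬ (0:ℤ) < m')] at h2
        have hc1 : (1:ℝ) ≤ (m:ℝ) := by exact_mod_cast hp
        have hc2 : (m':ℝ) + 1 ≤ 0 := by
          have : m' + 1 ≤ 0 := by omega
          exact_mod_cast this
        have h11 := h1.1
        have h22 := h2.2
        nlinarith [mul_nonneg (by linarith : (0:ℝ) ≤ (m:ℝ)-1) hst0.le,
          mul_nonpos_of_nonpos_of_nonneg hc2 hst0.le]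
      intro m hm m' hm' hne
      rcases hmpos m hm with hp | hn <;> rcases hmpos m' hm' with hp' | hn'
      · rcases lt_or_gt_of_ne hne with hlt | hgt
        · exact haux m m' hp hp' hlt
        · exact (haux m' m hp' hp hgt).symm
      · exact hauxpn m m' hp hn'
      · exact (hauxpn m' m hp' hn).symm
      · rcases lt_or_gt_of_ne hne with hlt | hgt
        · exact hauxn m m' hn hn' hlt
        · exact (hauxn m' m hn' hn hgt).symm
    have hfin : ∀ s : Finset {k : ℤ // (N n : ℤ) < |k|},
        ∑ k ∈ s, G (((k : ℤ) : ℝ)/L) ≤ L * Aint + E := by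
      intro s
      set s' : Finset ℤ := s.image Subtype.val with hs'def
      have hmem : ∀ m ∈ s', (N n:ℤ) < |m| := by
        intro m hmm
        rw [hs'def, Finset.mem_image] at hmm
        obtain ⟨k, _, rfl⟩ := hmm
        exact k.2
      have hsum : ∑ k ∈ s, G (((k : ℤ) : ℝ)/L) = ∑ m ∈ s', G ((m:ℝ)/L) := by
        rw [hs'def, Finset.sum_image (fun a _ b _ hab => Subtype.ext hab)]
      rw [hsum]
      have hstep : ∑ m ∈ s', G ((m:ℝ)/L)
          ≤ ∑ m ∈ s', (L * (∫ x in J m, G x) + ∫ x in J m, |φ x|) :=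
        Finset.sum_le_sum fun m hmm => hvol m (hmem m hmm)
      have hsplit : ∑ m ∈ s', (L * (∫ x in J m, G x) + ∫ x in J m, |φ x|)
          = L * (∑ m ∈ s', ∫ x in J m, G x) + ∑ m ∈ s', ∫ x in J m, |φ x| := by
        rw [Finset.sum_add_distrib, Finset.mul_sum]
      have hGsum : (∑ m ∈ s', ∫ x in J m, G x) ≤ Aint := by
        rw [← integral_biUnion_finset s' (fun m _ => hJmeas m)
          (fun a ha b hb hab => hdisj a (hmem a ha) b (hmem b hb) hab)
          (fun m _ => hGint.integrableOn)]
        rw [hAintdef]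
        apply setIntegral_mono_set hGint.integrableOn
          (Filter.Eventually.of_forall fun x => Complex.normSq_nonneg _)
        exact HasSubset.Subset.eventuallyLE
          (Set.iUnion₂_subset fun m hmm => hsubT m (hmem m hmm))
      have hφsum : (∑ m ∈ s', ∫ x in J m, |φ x|) ≤ E := by
        rw [← integral_biUnion_finset s' (fun m _ => hJmeas m)
          (fun a ha b hb hab => hdisj a (hmem a ha) b (hmem b hb) hab)
          (fun m _ => hφint.abs.integrableOn)]
        rw [hEdef]
        exact setIntegral_le_integral hφint.abs
          (Filter.Eventually.of_forall fun x => abs_nonneg _)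
      have := mul_le_mul_of_nonneg_left hGsum hL.le
      linarith
    have htsum_eq : (∑' k : {k : ℤ // (N n : ℤ) < |k|},
          ‖fourierT f (((k : ℤ) : ℝ) / L)‖^2)
        = ∑' k : {k : ℤ // (N n : ℤ) < |k|}, G (((k : ℤ) : ℝ)/L) :=
      tsum_congr fun k => Complex.sq_norm _
    have htsum_le : (∑' k : {k : ℤ // (N n : ℤ) < |k|}, G (((k : ℤ) : ℝ)/L)) ≤ L * Aint + E :=
      tsum_le_of_sum_le' (add_nonneg (mul_nonneg hL.le hAint0) hE0) hfin
    calc (1 / L) * ∑' k : {k : ℤ // (N n : ℤ) < |k|},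
          ‖fourierT f (((k : ℤ) : ℝ) / L)‖^2
        ≤ (1 / L) * (L * Aint + E) := by
          rw [htsum_eq]
          exact mul_le_mul_of_nonneg_left htsum_le (by positivity)
      _ = Aint + (1 / L) * E := by
          field_simp
  have hu0 : ∀ n : ℕ, 0 ≤ (1 / (n : ℝ) ^ (1 - α)) *
      ∑' k : {k : ℤ // (N n : ℤ) < |k|},
        ‖fourierT f ((k : ℤ) / (n : ℝ) ^ (1 - α))‖ ^ 2 :=
    fun n => mul_nonneg (one_div_nonneg.2 (Real.rpow_nonneg (Nat.cast_nonneg n) _))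
      (tsum_nonneg fun k => sq_nonneg _)
  have htend0 : Tendsto (fun n : ℕ => 1 / (n:ℝ)^(1-α)) atTop (𝓝 0) := by
    have h1 : Tendsto (fun n : ℕ => (n:ℝ)^(1-α)) atTop atTop :=
      (tendsto_rpow_atTop (by linarith)).comp tendsto_natCast_atTop_atTop
    exact h1.inv_tendsto_atTop.congr fun n => by simp [one_div]
  have htendv : Tendsto (fun n : ℕ => Aint + (1/(n:ℝ)^(1-α)) * E) atTop (𝓝 Aint) := by
    have h2 := tendsto_const_nhds (x := Aint) (f := atTop (α := ℕ)) |>.add (htend0.mul_const E)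
    simpa using h2
  have hcob : Filter.IsCoboundedUnder (· ≤ ·) atTop (fun n : ℕ =>
      (1 / (n : ℝ) ^ (1 - α)) *
        ∑' k : {k : ℤ // (N n : ℤ) < |k|},
          ‖fourierT f ((k : ℤ) / (n : ℝ) ^ (1 - α))‖ ^ 2) := by
    exact Filter.isCoboundedUnder_le_of_eventually_le atTop
      (Filter.Eventually.of_forall fun n => hu0 n)
  have hbdd : Filter.IsBoundedUnder (· ≤ ·) atTop
      (fun n : ℕ => Aint + (1/(n:ℝ)^(1-α)) * E) := htendv.isBoundedUnder_le
  calc Filter.limsup (fun n : ℕ =>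
        (1 / (n : ℝ) ^ (1 - α)) *
          ∑' k : {k : ℤ // (N n : ℤ) < |k|},
            ‖fourierT f ((k : ℤ) / (n : ℝ) ^ (1 - α))‖ ^ 2) atTop
      ≤ Filter.limsup (fun n : ℕ => Aint + (1/(n:ℝ)^(1-α)) * E) atTop :=
        Filter.limsup_le_limsup hev hcob hbdd
    _ = Aint := htendv.limsup_eq
    _ = ∫ ξ in T, ‖fourierT f ξ‖ ^ 2 := hA_eq.symm
end

section
/- Let f : ℝ → ℝ be Hölder continuous with exponent δ ∈ (0,1), bounded, and supported in [-π,π]. Let λ_n → ∞. Then for θ with 2π ≤ |θ| ≤ Θ_n, | ∫_{-π}^{π} (f(ω)/(1 − ω/θ)) e^{i λ_n ω} dω | ≤ C λ_n^{−δ}, with constant C independent of θ and n. -/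
open MeasureTheory Real Complex Filter Topology

/-- Quantitative Riemann–Lebesgue for Hölder functions: if `f` is `δ`-Hölder, bounded and
supported in `[-π,π]`, and `λ_n → ∞`, then for `2π ≤ |θ| ≤ Θ_n`,
`|∫_{-π}^{π} (f(ω)/(1 − ω/θ)) e^{i λ_n ω} dω| ≤ C λ_n^{−δ}` with `C` independent of `θ, n`. -/
theorem stmt_17 (f : ℝ → ℝ) (δ : ℝ) (hδ0 : 0 < δ) (hδ1 : δ < 1)
    (H : ℝ) (hH : ∀ x y : ℝ, |f x - f y| ≤ H * |x - y| ^ δ)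
    (B : ℝ) (hB : ∀ x, |f x| ≤ B)
    (hsupp : Function.support f ⊆ Set.Icc (-Real.pi) Real.pi)
    (lam : ℕ → ℝ) (hlam : Tendsto lam atTop atTop) (Θ : ℕ → ℝ) :
    ∃ C : ℝ, 0 < C ∧ ∀ᶠ n : ℕ in atTop, ∀ θ : ℝ,
      2 * Real.pi ≤ |θ| → |θ| ≤ Θ n →
      ‖(∫ ω in Set.Icc (-Real.pi) Real.pi,
          ((f ω : ℂ) / (1 - ω / θ)) * Complex.exp (Complex.I * lam n * ω))‖
        ≤ C * lam n ^ (-δ) := by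
  have hπ := Real.pi_pos
  have hπ3 := Real.pi_gt_three
  have hπ4 := Real.pi_le_four
  have hH0 : 0 ≤ H := by
    have h1 := hH 0 1
    have h2 : |(0:ℝ) - 1| = 1 := by norm_num
    rw [h2, Real.one_rpow, mul_one] at h1
    exact le_trans (abs_nonneg _) h1
  have hB0 : 0 ≤ B := le_trans (abs_nonneg _) (hB 0)
  -- continuity of f
  have hfc : Continuous f := by
    rw [continuous_iff_continuousAt]
    intro x
    rw [ContinuousAt, tendsto_iff_dist_tendsto_zero]
    apply squeeze_zero (fun y => dist_nonneg) (g := fun y => H * |y - x| ^ δ)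
    · intro y
      rw [Real.dist_eq]
      exact hH y x
    · have h1 : Tendsto (fun y : ℝ => |y - x|) (𝓝 x) (𝓝 0) := by
        have hc : Continuous (fun y : ℝ => |y - x|) :=
          (continuous_id.sub continuous_const).abs
        have := hc.tendsto x
        simpa using this
      have h2 : ContinuousAt (fun t : ℝ => H * t ^ δ) 0 :=
        continuousAt_const.mul (Real.continuousAt_rpow_const 0 δ (Or.inr hδ0.le))
      have h3 := h2.tendsto.comp h1
      simpa [Function.comp_def, Real.zero_rpow hδ0.ne'] using h3
  -- f vanishes outside the open interval, including at the endpoints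
  have hf0' : ∀ x, x ∉ Set.Icc (-Real.pi) Real.pi → f x = 0 := by
    intro x hx
    by_contra h
    exact hx (hsupp h)
  have hfpos : f Real.pi = 0 := by
    have h1 : Tendsto f (𝓝[>] Real.pi) (𝓝 (f Real.pi)) :=
      (hfc.continuousAt.continuousWithinAt).tendsto
    have h2 : Tendsto f (𝓝[>] Real.pi) (𝓝 0) := by
      apply Tendsto.congr' _ tendsto_const_nhds
      filter_upwards [self_mem_nhdsWithin] with y hy
      have hy' : Real.pi < y := hy
      exact (hf0' y (fun hc => absurd hc.2 (not_le.2 hy'))).symm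
    exact tendsto_nhds_unique h1 h2
  have hfneg : f (-Real.pi) = 0 := by
    have h1 : Tendsto f (𝓝[<] (-Real.pi)) (𝓝 (f (-Real.pi))) :=
      (hfc.continuousAt.continuousWithinAt).tendsto
    have h2 : Tendsto f (𝓝[<] (-Real.pi)) (𝓝 0) := by
      apply Tendsto.congr' _ tendsto_const_nhds
      filter_upwards [self_mem_nhdsWithin] with y hy
      have hy' : y < -Real.pi := hy
      exact (hf0' y (fun hc => absurd hc.1 (not_le.2 hy'))).symm
    exact tendsto_nhds_unique h1 h2
  have hfz : ∀ x : ℝ, (x ≤ -Real.pi ∨ Real.pi ≤ x) → f x = 0 := by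
    intro x hx
    rcases hx with hx | hx
    · rcases eq_or_lt_of_le hx with h | h
      · rw [h]; exact hfneg
      · exact hf0' x (fun hc => absurd hc.1 (not_le.2 h))
    · rcases eq_or_lt_of_le hx with h | h
      · rw [← h]; exact hfpos
      · exact hf0' x (fun hc => absurd hc.2 (not_le.2 h))
  have hCpos : 0 < 3 * Real.pi ^ 2 * (4 * H + 3 * B) / 2 + 1 := by
    have h1 : (0:ℝ) ≤ Real.pi ^ 2 * (4 * H + 3 * B) :=
      mul_nonneg (sq_nonneg _) (by linarith)
    linarith
  refine ⟨3 * Real.pi ^ 2 * (4 * H + 3 * B) / 2 + 1, hCpos, ?_⟩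
  filter_upwards [hlam.eventually (eventually_ge_atTop (4:ℝ))] with n hL
  intro θ hθ1 _
  set L : ℝ := lam n with hLdef
  have hL0 : (0:ℝ) < L := by linarith
  have hθ0 : θ ≠ 0 := by
    intro h
    rw [h, abs_zero] at hθ1
    linarith
  have hθabs : (0:ℝ) < |θ| := by linarith
  set h : ℝ := Real.pi / L with hhdef
  have hh0 : 0 < h := div_pos hπ hL0
  have hh1 : h ≤ 1 := by
    rw [div_le_one hL0]; linarith
  have hLh : L * h = Real.pi := by
    rw [hhdef]
    field_simp
  -- denominator bound
  have hden : ∀ ω : ℝ, |ω| ≤ Real.pi + h → 1/4 ≤ |1 - ω/θ| := by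
    intro ω hω
    have h1 : |ω / θ| ≤ 3/4 := by
      rw [abs_div, div_le_iff₀ hθabs]
      linarith
    have h2 := abs_sub_abs_le_abs_sub (1:ℝ) (ω/θ)
    rw [abs_one] at h2
    linarith
  have hdenne : ∀ ω : ℝ, |ω| ≤ Real.pi + h → (1 - ω/θ) ≠ 0 := by
    intro ω hω hc
    have := hden ω hω
    rw [hc, abs_zero] at this
    linarith
  set q : ℝ → ℝ := fun ω => f ω / (1 - ω/θ) with hqdef
  -- pointwise Hölder estimate for the difference
  have hhδ : h ≤ h ^ δ := by
    calc h = h ^ (1:ℝ) := (Real.rpow_one h).symm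
      _ ≤ h ^ δ := Real.rpow_le_rpow_of_exponent_ge hh0 hh1 hδ1.le
  have hhδ0 : 0 ≤ h ^ δ := Real.rpow_nonneg hh0.le δ
  have hkey : ∀ ω : ℝ, -Real.pi - h ≤ ω → ω ≤ Real.pi →
      |q ω - q (ω + h)| ≤ (4*H + 3*B) * h ^ δ := by
    intro ω h1 h2
    have hω1 : |ω| ≤ Real.pi + h := abs_le.2 ⟨by linarith, by linarith⟩
    have hω2 : |ω + h| ≤ Real.pi + h := abs_le.2 ⟨by linarith, by linarith⟩
    have hd1 := hden ω hω1
    have hd2 := hden (ω + h) hω2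
    have hd1' : (1 - ω/θ) ≠ 0 := hdenne ω hω1
    have hd2' : (1 - (ω+h)/θ) ≠ 0 := hdenne (ω+h) hω2
    set d1 : ℝ := 1 - ω/θ with hd1def
    set d2 : ℝ := 1 - (ω+h)/θ with hd2def
    have hsplit : q ω - q (ω + h)
        = (f ω - f (ω+h))/d1 + f (ω+h) * ((d2 - d1)/(d1*d2)) := by
      simp only [hqdef]
      rw [← hd1def, ← hd2def]
      field_simp
      ring
    have hd1pos : (0:ℝ) < |d1| := by linarith
    have hd2pos : (0:ℝ) < |d2| := by linarith
    have e1 : |(f ω - f (ω+h))/d1| ≤ 4 * (H * h ^ δ) := by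
      rw [abs_div]
      have hfb : |f ω - f (ω+h)| ≤ H * h ^ δ := by
        have := hH ω (ω + h)
        have habs : |ω - (ω + h)| = h := by
          rw [show ω - (ω + h) = -h by ring, abs_neg, abs_of_pos hh0]
        rwa [habs] at this
      have step : |f ω - f (ω+h)| / |d1| ≤ 4 * |f ω - f (ω+h)| := by
        rw [div_le_iff₀ hd1pos]
        have := mul_le_mul_of_nonneg_left hd1
          (by positivity : (0:ℝ) ≤ 4 * |f ω - f (ω+h)|)
        linarith
      linarith
    have e2 : |f (ω+h) * ((d2 - d1)/(d1*d2))| ≤ 3 * (B * h ^ δ) := by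
      have hdd : d2 - d1 = -(h/θ) := by
        simp only [hd1def, hd2def]
        ring
      have habs_dd : |d2 - d1| ≤ h / 6 := by
        rw [hdd, abs_neg, abs_div, abs_of_pos hh0, div_le_div_iff₀ hθabs (by norm_num)]
        have h6 : (6:ℝ) ≤ |θ| := by linarith
        exact mul_le_mul_of_nonneg_left h6 hh0.le
      rw [abs_mul, abs_div, abs_mul]
      have hq2 : |d2 - d1| / (|d1| * |d2|) ≤ 3 * h := by
        rw [div_le_iff₀ (by positivity)]
        have h16 : (1:ℝ)/16 ≤ |d1| * |d2| := by
          have := mul_le_mul hd1 hd2 (by norm_num) (abs_nonneg d1)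
          linarith
        have := mul_le_mul_of_nonneg_left h16 (by linarith : (0:ℝ) ≤ 3 * h)
        linarith
      have hB' := hB (ω+h)
      calc |f (ω+h)| * (|d2 - d1| / (|d1| * |d2|))
          ≤ B * (3 * h) := mul_le_mul hB' hq2 (by positivity) hB0
        _ ≤ 3 * (B * h ^ δ) := by
            have := mul_le_mul_of_nonneg_left hhδ hB0
            linarith
    calc |q ω - q (ω + h)| ≤ |(f ω - f (ω+h))/d1| + |f (ω+h) * ((d2 - d1)/(d1*d2))| := by
          rw [hsplit]; exact abs_add_le _ _
      _ ≤ 4 * (H * h ^ δ) + 3 * (B * h ^ δ) := add_le_add e1 e2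
      _ = (4*H + 3*B) * h ^ δ := by ring
  -- complex integrand
  set Ec : ℝ → ℂ := fun ω => Complex.exp (Complex.I * L * ω) with hEcdef
  set G : ℝ → ℂ := fun ω => (q ω : ℂ) * Ec ω with hGdef
  set Gh : ℝ → ℂ := fun ω => (q (ω + h) : ℂ) * Ec ω with hGhdef
  have hEabs : ∀ ω : ℝ, ‖Ec ω‖ = 1 := by
    intro ω
    have harg : Complex.I * L * ω = ((L * ω : ℝ) : ℂ) * Complex.I := by push_cast; ring
    simp only [hEcdef]
    rw [harg, Complex.norm_exp_ofReal_mul_I]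
  have hEshift : ∀ ω : ℝ, Ec (ω + h) = - Ec ω := by
    intro ω
    have hc : (L:ℂ) * (h:ℂ) = (Real.pi : ℂ) := by
      exact_mod_cast congrArg Complex.ofReal hLh
    have harg : Complex.I * L * ((ω:ℝ) + h : ℝ) = Complex.I * L * ω + Real.pi * Complex.I := by
      push_cast
      linear_combination Complex.I * hc
    simp only [hEcdef]
    rw [harg, Complex.exp_add, Complex.exp_pi_mul_I]
    ring
  have hEc_cont : Continuous Ec := by
    apply Complex.continuous_exp.comp
    exact (continuous_const.mul Complex.continuous_ofReal)
  -- continuity of q on the relevant set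
  have hqc : ContinuousOn q (Set.Icc (-Real.pi - h) (Real.pi + h)) := by
    apply ContinuousOn.div hfc.continuousOn
      ((continuous_const.sub (continuous_id.div_const θ)).continuousOn)
    intro x hx
    exact hdenne x (abs_le.2 ⟨by linarith [hx.1], by linarith [hx.2]⟩)
  have hGc : ContinuousOn G (Set.Icc (-Real.pi - h) (Real.pi + h)) :=
    (Complex.continuous_ofReal.comp_continuousOn hqc).mul hEc_cont.continuousOn
  have hGint : ∀ a b : ℝ, -Real.pi - h ≤ a → b ≤ Real.pi + h → a ≤ b →
      IntervalIntegrable G volume a b := by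
    intro a b ha hb hab
    apply (hGc.mono _).intervalIntegrable
    rw [Set.uIcc_of_le hab]
    exact Set.Icc_subset_Icc ha hb
  have hGhc : ContinuousOn Gh (Set.Icc (-Real.pi - h) Real.pi) := by
    apply ContinuousOn.mul _ hEc_cont.continuousOn
    apply Complex.continuous_ofReal.comp_continuousOn
    have hmap : Set.MapsTo (fun x : ℝ => x + h) (Set.Icc (-Real.pi - h) Real.pi)
        (Set.Icc (-Real.pi - h) (Real.pi + h)) := by
      intro x hx
      simp only [Set.mem_Icc] at hx ⊢
      exact ⟨by linarith [hx.1, hh0.le], by linarith [hx.2]⟩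
    exact hqc.comp ((continuous_id.add continuous_const).continuousOn) hmap
  have hGhint : IntervalIntegrable Gh volume (-Real.pi - h) Real.pi := by
    apply (hGhc.mono _).intervalIntegrable
    rw [Set.uIcc_of_le (by linarith)]
  -- q vanishes with f
  have hqz : ∀ x : ℝ, (x ≤ -Real.pi ∨ Real.pi ≤ x) → q x = 0 := by
    intro x hx
    simp only [hqdef, hfz x hx, zero_div]
  -- the integral as an interval integral
  set I0 : ℂ := ∫ ω in (-Real.pi)..Real.pi, G ω with hI0def
  have hGeq : ∀ ω : ℝ, ((f ω : ℂ) / (1 - (ω:ℂ) / θ)) * Complex.exp (Complex.I * L * ω) = G ω := by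
    intro ω
    simp only [hGdef, hEcdef, hqdef]
    push_cast
    ring
  have hstmt : (∫ ω in Set.Icc (-Real.pi) Real.pi,
      ((f ω : ℂ) / (1 - (ω:ℂ) / θ)) * Complex.exp (Complex.I * L * ω)) = I0 := by
    rw [hI0def, intervalIntegral.integral_of_le (by linarith),
      ← MeasureTheory.integral_Icc_eq_integral_Ioc]
    exact setIntegral_congr_fun measurableSet_Icc (fun x _ => hGeq x)
  -- side pieces vanish
  have hzero1 : (∫ ω in (-Real.pi - h)..(-Real.pi), G ω) = 0 := by
    rw [intervalIntegral.integral_congr (g := fun _ => (0:ℂ)), intervalIntegral.integral_zero]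
    intro x hx
    rw [Set.uIcc_of_le (by linarith)] at hx
    simp only [hGdef]
    rw [hqz x (Or.inl hx.2)]
    simp
  have hzero2 : (∫ ω in Real.pi..(Real.pi + h), G ω) = 0 := by
    rw [intervalIntegral.integral_congr (g := fun _ => (0:ℂ)), intervalIntegral.integral_zero]
    intro x hx
    rw [Set.uIcc_of_le (by linarith)] at hx
    simp only [hGdef]
    rw [hqz x (Or.inr hx.1)]
    simp
  have hsplit1 : (∫ ω in (-Real.pi - h)..Real.pi, G ω) = I0 := by
    have := intervalIntegral.integral_add_adjacent_intervals
      (hGint (-Real.pi - h) (-Real.pi) le_rfl (by linarith) (by linarith))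
      (hGint (-Real.pi) Real.pi (by linarith) (by linarith) (by linarith))
    rw [hzero1, zero_add] at this
    rw [← this]
  have hsplit2 : (∫ ω in (-Real.pi)..(Real.pi + h), G ω) = I0 := by
    have := intervalIntegral.integral_add_adjacent_intervals
      (hGint (-Real.pi) Real.pi (by linarith) (by linarith) (by linarith))
      (hGint Real.pi (Real.pi + h) (by linarith) le_rfl (by linarith))
    rw [hzero2, add_zero] at this
    rw [← this]
  -- the shift identity
  have hshift : (∫ ω in (-Real.pi - h)..Real.pi, Gh ω) = - I0 := by
    have hc1 : ∀ ω : ℝ, G (ω + h) = - Gh ω := by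
      intro ω
      simp only [hGdef, hGhdef]
      rw [hEshift ω]
      ring
    have hc2 : (∫ ω in (-Real.pi - h)..Real.pi, G (ω + h)) = ∫ ω in (-Real.pi)..(Real.pi + h), G ω := by
      rw [intervalIntegral.integral_comp_add_right G h,
        show -Real.pi - h + h = -Real.pi by ring]
    have hc3 : (∫ ω in (-Real.pi - h)..Real.pi, G (ω + h))
        = ∫ ω in (-Real.pi - h)..Real.pi, -(Gh ω) := by
      apply intervalIntegral.integral_congr
      intro x _
      exact hc1 x
    rw [hc3, intervalIntegral.integral_neg, hsplit2] at hc2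
    linear_combination -hc2
  -- combine: 2 I0 equals the integral of the difference
  have h2I : I0 + I0 = ∫ ω in (-Real.pi - h)..Real.pi, (G ω - Gh ω) := by
    rw [intervalIntegral.integral_sub
      (hGint (-Real.pi - h) Real.pi le_rfl (by linarith) (by linarith)) hGhint,
      hsplit1, hshift]
    ring
  have hbound : ‖∫ ω in (-Real.pi - h)..Real.pi, (G ω - Gh ω)‖
      ≤ ((4*H + 3*B) * h ^ δ) * |Real.pi - (-Real.pi - h)| := by
    apply intervalIntegral.norm_integral_le_of_norm_le_const
    intro x hx
    rw [Set.uIoc_of_le (by linarith)] at hx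
    have hk := hkey x hx.1.le hx.2
    have hrw : G x - Gh x = ((q x - q (x + h) : ℝ) : ℂ) * Ec x := by
      simp only [hGdef, hGhdef]
      push_cast
      ring
    rw [hrw, norm_mul, Complex.norm_real, hEabs, mul_one, Real.norm_eq_abs]
    exact hk
  have habs2 : ‖I0 + I0‖ = 2 * ‖I0‖ := by
    rw [show I0 + I0 = (2:ℂ) * I0 by ring, norm_mul]
    norm_num
  have hlen : |Real.pi - (-Real.pi - h)| ≤ 3 * Real.pi := by
    rw [abs_of_pos (by linarith)]
    linarith
  have hIb : ‖I0‖ ≤ (4*H + 3*B) * h ^ δ * (3 * Real.pi) / 2 := by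
    have hb := hbound
    rw [← h2I, habs2] at hb
    have hmul := mul_le_mul_of_nonneg_left hlen
      (mul_nonneg (by linarith : (0:ℝ) ≤ 4*H + 3*B) hhδ0)
    rw [mul_comm ((4*H + 3*B) * h ^ δ)] at hmul
    linarith
  have hhδval : h ^ δ ≤ Real.pi * L ^ (-δ) := by
    rw [hhdef, Real.div_rpow hπ.le hL0.le, Real.rpow_neg hL0.le, div_eq_mul_inv]
    apply mul_le_mul_of_nonneg_right _ (inv_nonneg.2 (Real.rpow_nonneg hL0.le δ))
    nth_rewrite 2 [← Real.rpow_one Real.pi]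
    exact Real.rpow_le_rpow_of_exponent_le (by linarith) hδ1.le
  rw [hstmt]
  calc ‖I0‖ ≤ (4*H+3*B) * h ^ δ * (3 * Real.pi) / 2 := hIb
    _ ≤ (4*H+3*B) * (Real.pi * L ^ (-δ)) * (3 * Real.pi) / 2 := by
        have h1 := mul_le_mul_of_nonneg_left hhδval (by linarith : (0:ℝ) ≤ 4*H+3*B)
        have h2 := mul_le_mul_of_nonneg_right h1 (by linarith : (0:ℝ) ≤ 3 * Real.pi)
        linarith
    _ = (3 * Real.pi ^ 2 * (4 * H + 3 * B) / 2) * L ^ (-δ) := by ring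
    _ ≤ (3 * Real.pi ^ 2 * (4 * H + 3 * B) / 2 + 1) * L ^ (-δ) := by
        apply mul_le_mul_of_nonneg_right _ (Real.rpow_nonneg hL0.le (-δ))
        linarith
end
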